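/- arXiv:1204.4953 — 3 statements merged into one kernel-verified Lean document; each statement's English description precedes it below -/
import Mathlib

section
/- Let P be a point of PG(2,q^3) such that the three points P, P^q and P^{q^2} (the images of P under the Frobenius collineation and its square) are not collinear. Then the line of PG(2,q^3) joining P and P^q contains no F-rational point. -/
open scoped LinearAlgebra.Projectivization

/-- A point of `PG(2,K)` is `F`-rational if it has a representative vector all of whose
coordinates lie in the image of `F` in `K`. -/
def IsRationalPoint (F K : Type*) [Field F] [Field K] [Algebra F K]
    (x : ℙ K (Fin 3 → K)) : Prop :=
  ∃ v : Fin 3 → K, (∀ i, v i ∈ Set.range (algebraMap F K)) ∧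
    ∃ h : v ≠ 0, x = Projectivization.mk K v h

/-- The lines of `PG(2,K)` are the projectivizations of the 2-dimensional `K`-subspaces
of `K^3`; this is the set of points of the line corresponding to such a subspace `W`. -/
def linePoints (K : Type*) [Field K] (W : Submodule K (Fin 3 → K)) :
    Set (ℙ K (Fin 3 → K)) :=
  {x | x.submodule ≤ W}

/-- Three points of `PG(2,K)` are collinear if they lie on a common line. -/
def Collinear3 (K : Type*) [Field K] (x y z : ℙ K (Fin 3 → K)) : Prop :=
  ∃ W : Submodule K (Fin 3 → K), Module.finrank K W = 2 ∧
    x ∈ linePoints K W ∧ y ∈ linePoints K W ∧ z ∈ linePoints K W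

/-- Let `P` be a point of `PG(2,q^3)` (with representative vector `v`) such that `P`, `P^q`
and `P^{q^2}` (its images under the Frobenius collineation `x ↦ x^q` applied
coordinatewise, and its square) are not collinear. Then the line of `PG(2,q^3)` joining
`P` and `P^q` contains no `F`-rational point. -/
theorem conjugate_line_no_rational_point (q : ℕ) (F K : Type*) [Field F] [Field K]
    [Algebra F K] [Fintype F] [Fintype K]
    (hF : Fintype.card F = q) (hK : Fintype.card K = q ^ 3)
    (v : Fin 3 → K) (hv : v ≠ 0)
    (hvq : (fun i => v i ^ q) ≠ 0) (hvq2 : (fun i => v i ^ q ^ 2) ≠ 0)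
    (hnc : ¬ Collinear3 K (Projectivization.mk K v hv)
      (Projectivization.mk K (fun i => v i ^ q) hvq)
      (Projectivization.mk K (fun i => v i ^ q ^ 2) hvq2))
    (W : Submodule K (Fin 3 → K)) (hW : Module.finrank K W = 2)
    (hP : Projectivization.mk K v hv ∈ linePoints K W)
    (hPq : Projectivization.mk K (fun i => v i ^ q) hvq ∈ linePoints K W) :
    ∀ x : ℙ K (Fin 3 → K), IsRationalPoint F K x → x ∉ linePoints K W := by
  intro x hx hxW
  obtain ⟨w, hwF, hw0, rfl⟩ := hx
  -- membership translations
  have memW : ∀ (u : Fin 3 → K) (hu : u ≠ 0),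
      Projectivization.mk K u hu ∈ linePoints K W ↔ u ∈ W := by
    intro u hu
    constructor
    · intro h
      have h' : (Projectivization.mk K u hu).submodule ≤ W := h
      rw [Projectivization.submodule_mk] at h'
      exact h' (Submodule.mem_span_singleton_self u)
    · intro h
      show (Projectivization.mk K u hu).submodule ≤ W
      rw [Projectivization.submodule_mk]
      exact (Submodule.span_singleton_le_iff_mem u W).mpr h
  have hvW : v ∈ W := (memW v hv).mp hP
  have hvqW : (fun i => v i ^ q) ∈ W := (memW _ hvq).mp hPq
  have hwW : w ∈ W := (memW w hw0).mp hxW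
  -- v^{q^2} ∉ W
  have hq2 : (fun i => v i ^ q ^ 2) ∉ W := by
    intro h
    exact hnc ⟨W, hW, hP, hPq, (memW _ hvq2).mpr h⟩
  -- characteristic setup
  set p := ringChar F with hpdef
  haveI : CharP F p := ringChar.charP F
  haveI : Fact p.Prime := ⟨CharP.char_is_prime F p⟩
  haveI : CharP K p := charP_of_injective_algebraMap (algebraMap F K).injective p
  obtain ⟨n, -, hcard⟩ := FiniteField.card F p
  have hq : q = p ^ (n : ℕ) := by rw [← hF, hcard]
  -- Frobenius is additive
  have frob_add : ∀ a b : K, (a + b) ^ q = a ^ q + b ^ q := by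
    intro a b
    rw [hq]
    exact add_pow_char_pow a b p n
  -- w is fixed by Frobenius
  have hwfix : ∀ i, w i ^ q = w i := by
    intro i
    obtain ⟨a, ha⟩ := hwF i
    rw [← ha, ← map_pow]
    congr 1
    rw [← hF]
    exact FiniteField.pow_card a
  -- v^q is not a scalar multiple of v
  have hnmul : ∀ c : K, (fun i => v i ^ q) ≠ c • v := by
    intro c hc
    apply hq2
    have : (fun i => v i ^ q ^ 2) = c ^ q • (fun i => v i ^ q) := by
      funext i
      have : v i ^ q = c * v i := congrFun hc i
      calc v i ^ q ^ 2 = (v i ^ q) ^ q := by rw [pow_two, pow_mul]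
        _ = (c * v i) ^ q := by rw [this]
        _ = c ^ q * v i ^ q := mul_pow c (v i) q
    rw [this]
    exact W.smul_mem _ hvqW
  -- v and v^q are linearly independent
  have hind : LinearIndependent K ![v, fun i => v i ^ q] := by
    rw [LinearIndependent.pair_iff]
    intro s t hst
    by_cases ht : t = 0
    · subst ht
      rw [zero_smul, add_zero] at hst
      rcases smul_eq_zero.mp hst with hs | h
      · exact ⟨hs, rfl⟩
      · exact absurd h hv
    · exfalso
      apply hnmul (-(t⁻¹ * s))
      have : t • (fun i => v i ^ q) = -(s • v) := by
        rw [eq_neg_iff_add_eq_zero, add_comm]; exact hst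
      funext i
      have hi : t * v i ^ q = -(s * v i) := congrFun this i
      have := congrArg (fun z => t⁻¹ * z) hi
      try simp only at this
      rw [← mul_assoc, inv_mul_cancel₀ ht, one_mul] at this
      simp only [Pi.smul_apply, smul_eq_mul]
      rw [this]
      ring
  -- W = span {v, v^q}
  have hspan : Submodule.span K {v, fun i => v i ^ q} = W := by
    apply Submodule.eq_of_le_of_finrank_eq
    · rw [Submodule.span_le]
      intro u hu
      rcases hu with rfl | hu
      · exact hvW
      · rw [Set.mem_singleton_iff] at hu
        subst hu
        exact hvqW
    · rw [hW]
      have h1 : ({v, fun i => v i ^ q} : Set (Fin 3 → K))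
          = Set.range ![v, fun i => v i ^ q] := by
        rw [Matrix.range_cons_cons_empty]
      rw [h1, finrank_span_eq_card hind]
      simp
  -- express w as a combination of v and v^q
  have hwspan : w ∈ Submodule.span K {v, fun i => v i ^ q} := hspan ▸ hwW
  obtain ⟨a, b, hab⟩ := Submodule.mem_span_pair.mp hwspan
  -- apply Frobenius to the relation
  have hab' : ∀ i, a * v i + b * v i ^ q = w i := by
    intro i
    have := congrFun hab i
    simpa using this
  have hfrob : ∀ i, a ^ q * v i ^ q + b ^ q * v i ^ q ^ 2 = w i := by
    intro i
    have h := congrArg (fun z => z ^ q) (hab' i)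
    try simp only at h
    rw [frob_add, mul_pow, mul_pow, hwfix i, ← pow_mul, ← sq] at h
    exact h
  by_cases hb : b = 0
  · -- then w = a • v, and Frobenius-fixedness forces v^q proportional to v
    have ha0 : a ≠ 0 := by
      intro h
      apply hw0
      funext i
      have := hab' i
      rw [h, hb, zero_mul, zero_mul, add_zero] at this
      exact this.symm
    apply hnmul (a / a ^ q)
    have hq0 : q ≠ 0 := by
      rw [hq]
      exact pow_ne_zero _ (Nat.Prime.ne_zero Fact.out)
    funext i
    have h1 := hfrob i
    have h2 := hab' i
    rw [hb, zero_pow hq0, zero_mul, add_zero] at h1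
    rw [hb, zero_mul, add_zero] at h2
    have haq : a ^ q ≠ 0 := pow_ne_zero q ha0
    simp only [Pi.smul_apply, smul_eq_mul]
    field_simp
    linear_combination h1 - h2
  · -- then v^{q^2} ∈ W, contradiction
    apply hq2
    have hbq : b ^ q ≠ 0 := pow_ne_zero q hb
    have : (fun i => v i ^ q ^ 2)
        = (b ^ q)⁻¹ • (w - a ^ q • (fun i => v i ^ q)) := by
      funext i
      simp only [Pi.smul_apply, Pi.sub_apply, smul_eq_mul]
      have := hfrob i
      field_simp
      linear_combination this
    rw [this]
    exact W.smul_mem _ (W.sub_mem hwW (W.smul_mem _ hvqW))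
end

section
/- Let P be a point of PG(2,q^3) such that P, P^q and P^{q^2} are not collinear. Then for any two distinct F-rational points A and B of PG(2,q^3), there exists a quadratic form Q on F^3, unique up to multiplication by a nonzero scalar of F, such that the base change of Q to K vanishes on representative vectors of each of the five points A, B, P, P^q, P^{q^2}; moreover, the zero locus in PG(2,K) of the base change of Q contains no three collinear points (so the conic determined by Q is non-degenerate). -/
open scoped LinearAlgebra.Projectivization

/-- The value at `v : K^3` of the base change to `K` of a quadratic form `Q` on `F^3`:
writing `v = ∑ vᵢ eᵢ` in the standard basis, the base-changed form is
`∑ᵢ vᵢ² Q(eᵢ) + ∑_{i<j} vᵢ vⱼ polar(Q)(eᵢ,eⱼ)`, with the coefficients mapped into `K`. -/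
def evalBaseChange (F K : Type*) [Field F] [Field K] [Algebra F K]
    (Q : QuadraticForm F (Fin 3 → F)) (v : Fin 3 → K) : K :=
  (∑ i, v i ^ 2 * algebraMap F K (Q (Pi.single i 1))) +
    ∑ i, ∑ j, if i < j then
      v i * v j * algebraMap F K (QuadraticMap.polar Q (Pi.single i 1) (Pi.single j 1))
    else 0

/-- The base change of `Q` to `K` vanishes at the point `x` of `PG(2,K)`, i.e. it vanishes
at every representative vector of `x`. -/
def VanishesAt (F K : Type*) [Field F] [Field K] [Algebra F K]
    (Q : QuadraticForm F (Fin 3 → F)) (x : ℙ K (Fin 3 → K)) : Prop :=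
  ∀ (v : Fin 3 → K) (h : v ≠ 0), x = Projectivization.mk K v h → evalBaseChange F K Q v = 0

/-- The zero locus in `PG(2,K)` of the base change to `K` of a quadratic form on `F^3`:
the set of points all of whose representative vectors are zeros of the form. -/
def zeroLocus (F K : Type*) [Field F] [Field K] [Algebra F K]
    (Q : QuadraticForm F (Fin 3 → F)) : Set (ℙ K (Fin 3 → K)) :=
  {x | VanishesAt F K Q x}

/-! ### Auxiliary machinery -/

open Matrix

namespace SpecialConic

variable {R S : Type*} [CommRing R] [CommRing S]

/-- Evaluation of the quadratic form with coefficient vector `c` at `x`. -/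
def ev2 (c : Fin 6 → R) (x : Fin 3 → R) : R :=
  c 0 * x 0 ^ 2 + c 1 * x 1 ^ 2 + c 2 * x 2 ^ 2 +
    c 3 * (x 0 * x 1) + c 4 * (x 0 * x 2) + c 5 * (x 1 * x 2)

/-- Polar form of `ev2`. -/
def pol2 (c : Fin 6 → R) (x y : Fin 3 → R) : R :=
  2 * c 0 * (x 0 * y 0) + 2 * c 1 * (x 1 * y 1) + 2 * c 2 * (x 2 * y 2) +
    c 3 * (x 0 * y 1 + x 1 * y 0) + c 4 * (x 0 * y 2 + x 2 * y 0) +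
    c 5 * (x 1 * y 2 + x 2 * y 1)

lemma dot3 (u x : Fin 3 → R) : u ⬝ᵥ x = u 0 * x 0 + u 1 * x 1 + u 2 * x 2 := by
  simp [dotProduct, Fin.sum_univ_three]

lemma ev2_smul (c : Fin 6 → R) (a : R) (x : Fin 3 → R) :
    ev2 c (a • x) = a ^ 2 * ev2 c x := by
  simp only [ev2, Pi.smul_apply, smul_eq_mul]; ring

lemma ev2_add_smul (c : Fin 6 → R) (a b : R) (x y : Fin 3 → R) :
    ev2 c (a • x + b • y) =
      a ^ 2 * ev2 c x + b ^ 2 * ev2 c y + a * b * pol2 c x y := by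
  simp only [ev2, pol2, Pi.add_apply, Pi.smul_apply, smul_eq_mul]; ring

lemma ev2_addc (c c' : Fin 6 → R) (x : Fin 3 → R) :
    ev2 (c + c') x = ev2 c x + ev2 c' x := by
  simp only [ev2, Pi.add_apply]; ring

lemma ev2_smulc (a : R) (c : Fin 6 → R) (x : Fin 3 → R) :
    ev2 (a • c) x = a * ev2 c x := by
  simp only [ev2, Pi.smul_apply, smul_eq_mul]; ring

lemma ev2_comp (f : R →+* S) (c : Fin 6 → R) (x : Fin 3 → R) :
    ev2 (fun i => f (c i)) (fun i => f (x i)) = f (ev2 c x) := by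
  simp only [ev2, map_add f, _root_.map_mul f, map_pow f]

lemma dot3_comp (f : R →+* S) (u x : Fin 3 → R) :
    (fun i => f (u i)) ⬝ᵥ (fun i => f (x i)) = f (u ⬝ᵥ x) := by
  simp only [dot3, map_add f, _root_.map_mul f]

/-- decomposition of `pol2` in its first argument. -/
lemma pol2_first (c : Fin 6 → R) (x y : Fin 3 → R) :
    pol2 c x y = x 0 * pol2 c (Pi.single 0 1) y + x 1 * pol2 c (Pi.single 1 1) y
      + x 2 * pol2 c (Pi.single 2 1) y := by
  simp only [pol2, Pi.single_apply]
  simp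
  ring

/-- If `ev2 c` vanishes identically then `c = 0`. -/
lemma ev2_zero_coeffs {c : Fin 6 → R} (h : ∀ x, ev2 c x = 0) : c = 0 := by
  have h0 := h ![1, 0, 0]
  have h1 := h ![0, 1, 0]
  have h2 := h ![0, 0, 1]
  have h3 := h ![1, 1, 0]
  have h4 := h ![1, 0, 1]
  have h5 := h ![0, 1, 1]
  simp only [ev2] at h0 h1 h2 h3 h4 h5
  norm_num [Matrix.cons_val_zero, Matrix.cons_val_one, Matrix.head_cons] at h0 h1 h2 h3 h4 h5
  funext i
  fin_cases i <;> simp_all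

/-- Coefficient vector of the product of two linear forms. -/
def prodCoeff (u w : Fin 3 → R) : Fin 6 → R
  | 0 => u 0 * w 0
  | 1 => u 1 * w 1
  | 2 => u 2 * w 2
  | 3 => u 0 * w 1 + u 1 * w 0
  | 4 => u 0 * w 2 + u 2 * w 0
  | 5 => u 1 * w 2 + u 2 * w 1

lemma ev2_prodCoeff (u w x : Fin 3 → R) :
    ev2 (prodCoeff u w) x = (u ⬝ᵥ x) * (w ⬝ᵥ x) := by
  simp only [ev2, prodCoeff, dot3]
  ring

section FieldK

variable {K : Type*} [Field K]

/-- The linear functional `x ↦ u ⬝ᵥ x`. -/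
def dotL (u : Fin 3 → K) : (Fin 3 → K) →ₗ[K] K where
  toFun x := u ⬝ᵥ x
  map_add' x y := dotProduct_add u x y
  map_smul' a x := by simp [dotProduct_smul, smul_eq_mul]

@[simp] lemma dotL_apply (u x : Fin 3 → K) : dotL u x = u ⬝ᵥ x := rfl

lemma mem_ker_dotL {u x : Fin 3 → K} : x ∈ LinearMap.ker (dotL u) ↔ u ⬝ᵥ x = 0 :=
  LinearMap.mem_ker

lemma surjective_dotL {u : Fin 3 → K} (hu : u ≠ 0) : Function.Surjective (dotL u) := by
  obtain ⟨i, hi⟩ := Function.ne_iff.mp hu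
  intro b
  refine ⟨(b * (u i)⁻¹) • (Pi.single i 1 : Fin 3 → K), ?_⟩
  have hi' : u i ≠ 0 := by simpa using hi
  simp only [dotL_apply, dotProduct_smul, dotProduct_single, smul_eq_mul, mul_one]
  field_simp

lemma finrank_ker_dotL {u : Fin 3 → K} (hu : u ≠ 0) :
    Module.finrank K (LinearMap.ker (dotL u)) = 2 := by
  have h := LinearMap.finrank_range_add_finrank_ker (dotL u)
  rw [LinearMap.range_eq_top.mpr (surjective_dotL hu), finrank_top] at h
  simp only [Module.finrank_self, Module.finrank_pi, Fintype.card_fin] at h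
  omega

lemma det3_expand (x y z : Fin 3 → K) :
    Matrix.det ![x, y, z] =
      x 0 * (y 1 * z 2) - x 0 * (y 2 * z 1) - x 1 * (y 0 * z 2) + x 1 * (y 2 * z 0)
        + x 2 * (y 0 * z 1) - x 2 * (y 1 * z 0) := by
  rw [Matrix.det_fin_three (A := ![x, y, z])]
  simp only [Matrix.cons_val', Matrix.cons_val_zero, Matrix.cons_val_one, Matrix.head_cons,
    Matrix.empty_val', Matrix.cons_val_fin_one, Matrix.head_fin_const, Matrix.cons_val_two,
    Matrix.tail_cons]
  ring

lemma cross_dot (x y z : Fin 3 → K) :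
    (crossProduct x y) ⬝ᵥ z = Matrix.det ![z, x, y] := by
  rw [← triple_product_eq_det, dotProduct_comm]

lemma cross_dot_left (x y : Fin 3 → K) : (crossProduct x y) ⬝ᵥ x = 0 := by
  rw [cross_dot, det3_expand]; ring

lemma cross_dot_right (x y : Fin 3 → K) : (crossProduct x y) ⬝ᵥ y = 0 := by
  rw [cross_dot, det3_expand]; ring

/-- cross product commutes with ring homomorphisms. -/
lemma cross_comp (f : K →+* K) (x y : Fin 3 → K) :
    crossProduct (fun i => f (x i)) (fun i => f (y i)) = fun i => f ((crossProduct x y) i) := by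
  funext i
  simp only [cross_apply]
  fin_cases i <;> simp

lemma cross_eq_zero_cases (x y : Fin 3 → K) (h : crossProduct x y = 0) :
    x = 0 ∨ ∃ c : K, y = c • x := by
  by_cases hx : x = 0
  · exact Or.inl hx
  · right
    obtain ⟨i, hi⟩ := Function.ne_iff.mp hx
    have hi' : x i ≠ 0 := by simpa using hi
    refine ⟨y i / x i, ?_⟩
    have h0 := congrFun h 0
    have h1 := congrFun h 1
    have h2 := congrFun h 2
    simp only [cross_apply, Matrix.cons_val_zero, Matrix.cons_val_one, Matrix.head_cons,
      Matrix.cons_val_two, Matrix.tail_cons, Pi.zero_apply] at h0 h1 h2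
    funext j
    fin_cases i <;> fin_cases j <;>
      simp only [Fin.reduceFinMk, Pi.smul_apply, smul_eq_mul, Fin.isValue] at hi' ⊢ <;>
      rw [div_mul_eq_mul_div, eq_comm, div_eq_iff hi'] <;>
      first
        | ring1
        | linear_combination h0
        | linear_combination -h0
        | linear_combination h1
        | linear_combination -h1
        | linear_combination h2
        | linear_combination -h2

lemma det3_cycle (x y z : Fin 3 → K) : Matrix.det ![z, x, y] = Matrix.det ![x, y, z] := by
  rw [det3_expand, det3_expand]; ring

lemma det3_swap12 (x y z : Fin 3 → K) : Matrix.det ![y, x, z] = - Matrix.det ![x, y, z] := by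
  rw [det3_expand, det3_expand]; ring

lemma det3_prop23 (x y : Fin 3 → K) (c : K) (z : Fin 3 → K) (h : z = c • y) :
    Matrix.det ![x, y, z] = 0 := by
  subst h
  rw [det3_expand]
  simp only [Pi.smul_apply, smul_eq_mul]
  ring

lemma det3_prop12 (x y : Fin 3 → K) (c : K) (h : y = c • x) (z : Fin 3 → K) :
    Matrix.det ![x, y, z] = 0 := by
  subst h
  rw [det3_expand]
  simp only [Pi.smul_apply, smul_eq_mul]
  ring

/-- membership of 1-dimensional submodules. -/
lemma one_dim_prop {V : Type*} [AddCommGroup V] [Module K V] [FiniteDimensional K V]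
    {S : Submodule K V} (h : Module.finrank K S = 1) {x y : V}
    (hx : x ∈ S) (hy : y ∈ S) (hx0 : x ≠ 0) : ∃ c : K, y = c • x := by
  have hsp : (K ∙ x) ≤ S := (Submodule.span_singleton_le_iff_mem x S).mpr hx
  have heq : (K ∙ x) = S :=
    Submodule.eq_of_le_of_finrank_le hsp (by rw [finrank_span_singleton hx0, h])
  rw [← heq] at hy
  obtain ⟨a, ha⟩ := Submodule.mem_span_singleton.mp hy
  exact ⟨a, ha.symm⟩

lemma submodule_le_or_le {V : Type*} [AddCommGroup V] [Module K V]
    {S W1 W2 : Submodule K V} (h : ∀ x ∈ S, x ∈ W1 ∨ x ∈ W2) : S ≤ W1 ∨ S ≤ W2 := by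
  by_contra hc
  push_neg at hc
  obtain ⟨h1, h2⟩ := hc
  obtain ⟨a, haS, haW1⟩ := SetLike.not_le_iff_exists.mp h1
  obtain ⟨b, hbS, hbW2⟩ := SetLike.not_le_iff_exists.mp h2
  have haW2 : a ∈ W2 := (h a haS).resolve_left haW1
  have hbW1 : b ∈ W1 := (h b hbS).resolve_right hbW2
  rcases h (a + b) (S.add_mem haS hbS) with hab | hab
  · exact haW1 (by simpa using W1.sub_mem hab hbW1)
  · exact hbW2 (by simpa using W2.sub_mem hab haW2)

lemma ker_dotL_eq_of_le {u w : Fin 3 → K} (hu : u ≠ 0) (hw : w ≠ 0)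
    (h : LinearMap.ker (dotL u) ≤ LinearMap.ker (dotL w)) :
    LinearMap.ker (dotL u) = LinearMap.ker (dotL w) :=
  Submodule.eq_of_le_of_finrank_le h
    (by rw [finrank_ker_dotL hu, finrank_ker_dotL hw])

lemma inf_dim_one {W1 W2 : Submodule K (Fin 3 → K)} (h1 : Module.finrank K W1 = 2)
    (h2 : Module.finrank K W2 = 2) (hne : W1 ≠ W2) :
    Module.finrank K ((W1 ⊓ W2 : Submodule K (Fin 3 → K))) = 1 := by
  have hsum := Submodule.finrank_sup_add_finrank_inf_eq W1 W2
  have hsup_le : Module.finrank K ((W1 ⊔ W2 : Submodule K (Fin 3 → K))) ≤ 3 := by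
    have := Submodule.finrank_le (W1 ⊔ W2 : Submodule K (Fin 3 → K))
    simpa [Module.finrank_pi] using this
  have hlt : W1 < W1 ⊔ W2 := by
    rcases lt_or_eq_of_le (le_sup_left : W1 ≤ W1 ⊔ W2) with h | h
    · exact h
    · exfalso
      have hW2le : W2 ≤ W1 := by rw [h]; exact le_sup_right
      exact hne (Submodule.eq_of_le_of_finrank_le hW2le (by rw [h1, h2])).symm
  have hgt : 2 < Module.finrank K ((W1 ⊔ W2 : Submodule K (Fin 3 → K))) := by
    rw [← h1]
    exact Submodule.finrank_lt_finrank_of_lt hlt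
  omega

end FieldK

end SpecialConic

/-! ### Projective geometry helpers -/

namespace SpecialConic

variable {K : Type*} [Field K]

lemma mk_congr {v w : Fin 3 → K} (hv : v ≠ 0) (h : v = w) :
    Projectivization.mk K v hv = Projectivization.mk K w (h ▸ hv) := by subst h; rfl

lemma mk_eq_of_smul {x y : Fin 3 → K} (hx : x ≠ 0) (hy : y ≠ 0) {c : K} (h : y = c • x) :
    Projectivization.mk K y hy = Projectivization.mk K x hx :=
  (Projectivization.mk_eq_mk_iff' K y x hy hx).mpr ⟨c, h.symm⟩

lemma mem_linePoints_mk {W : Submodule K (Fin 3 → K)} {x : Fin 3 → K} (hx : x ≠ 0) :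
    Projectivization.mk K x hx ∈ linePoints K W ↔ x ∈ W := by
  show (Projectivization.mk K x hx).submodule ≤ W ↔ _
  rw [Projectivization.submodule_mk, Submodule.span_singleton_le_iff_mem]

lemma collinear3_of_mem {W : Submodule K (Fin 3 → K)} (hW : Module.finrank K W = 2)
    {x y z : Fin 3 → K} (hx : x ≠ 0) (hy : y ≠ 0) (hz : z ≠ 0)
    (hxW : x ∈ W) (hyW : y ∈ W) (hzW : z ∈ W) :
    Collinear3 K (Projectivization.mk K x hx) (Projectivization.mk K y hy)
      (Projectivization.mk K z hz) :=
  ⟨W, hW, (mem_linePoints_mk hx).mpr hxW, (mem_linePoints_mk hy).mpr hyW,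
    (mem_linePoints_mk hz).mpr hzW⟩

lemma collinear3_of_dot_eq_zero {u : Fin 3 → K} (hu : u ≠ 0) {x y z : Fin 3 → K}
    (hx : x ≠ 0) (hy : y ≠ 0) (hz : z ≠ 0)
    (h1 : u ⬝ᵥ x = 0) (h2 : u ⬝ᵥ y = 0) (h3 : u ⬝ᵥ z = 0) :
    Collinear3 K (Projectivization.mk K x hx) (Projectivization.mk K y hy)
      (Projectivization.mk K z hz) :=
  collinear3_of_mem (finrank_ker_dotL hu) hx hy hz
    (mem_ker_dotL.mpr h1) (mem_ker_dotL.mpr h2) (mem_ker_dotL.mpr h3)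

lemma collinear3_of_det_zero {x y z : Fin 3 → K} (hx : x ≠ 0) (hy : y ≠ 0) (hz : z ≠ 0)
    (h : Matrix.det ![x, y, z] = 0) :
    Collinear3 K (Projectivization.mk K x hx) (Projectivization.mk K y hy)
      (Projectivization.mk K z hz) := by
  by_cases hxy : crossProduct x y = 0
  · rcases cross_eq_zero_cases x y hxy with h' | ⟨c, hc⟩
    · exact absurd h' hx
    · by_cases hxz : crossProduct x z = 0
      · rcases cross_eq_zero_cases x z hxz with h' | ⟨d, hd⟩
        · exact absurd h' hx
        · -- y, z are both multiples of x; pick u ⟂ x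
          obtain ⟨u, hu, hux⟩ : ∃ u : Fin 3 → K, u ≠ 0 ∧ u ⬝ᵥ x = 0 := by
            by_cases h0 : x 0 = 0
            · refine ⟨![1, 0, 0], ?_, ?_⟩
              · intro hcon
                have := congrFun hcon 0
                norm_num at this
              · rw [dot3]; simp [h0]
            · refine ⟨![x 1, -(x 0), 0], ?_, ?_⟩
              · intro hcon
                have := congrFun hcon 1
                norm_num at this
                exact h0 this
              · rw [dot3]; simp; ring
          refine collinear3_of_dot_eq_zero hu hx hy hz hux ?_ ?_
          · rw [hc, dotProduct_smul, hux, smul_zero]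
          · rw [hd, dotProduct_smul, hux, smul_zero]
      · refine collinear3_of_dot_eq_zero hxz hx hy hz (cross_dot_left x z) ?_
          (cross_dot_right x z)
        rw [hc, dotProduct_smul, cross_dot_left, smul_zero]
  · refine collinear3_of_dot_eq_zero hxy hx hy hz (cross_dot_left x y) (cross_dot_right x y) ?_
    rw [cross_dot]
    rw [det3_expand] at h ⊢
    linear_combination h

/-- The key "degenerate conic" engine: if the (coefficientwise `σ`-fixed) conic `ev2 c`
vanishes on the plane `u ⟂` and at `v`, then `v, σv, σ²v` lie on a common 2-plane. -/
lemma engine (σ : K →+* K) (hσ3 : ∀ t, σ (σ (σ t)) = t)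
    {c : Fin 6 → K} (hc : c ≠ 0) (hcσ : ∀ i, σ (c i) = c i)
    {u : Fin 3 → K} (hu : u ≠ 0)
    (hvan : ∀ x, u ⬝ᵥ x = 0 → ev2 c x = 0)
    {v : Fin 3 → K} (hev : ev2 c v = 0) :
    ∃ W : Submodule K (Fin 3 → K), Module.finrank K W = 2 ∧
      v ∈ W ∧ (fun i => σ (v i)) ∈ W ∧ (fun i => σ (σ (v i))) ∈ W := by
  classical
  have hσinj : Function.Injective σ := fun a b hab => by
    have := congrArg (fun t => σ (σ t)) hab
    simpa [hσ3] using this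
  have hσsurj : Function.Surjective σ := fun a => ⟨σ (σ a), hσ3 a⟩
  -- find a coordinate direction not orthogonal to u
  obtain ⟨k, hk⟩ := Function.ne_iff.mp hu
  have hk' : u k ≠ 0 := by simpa using hk
  set y : Fin 3 → K := Pi.single k 1 with hy
  have huy : u ⬝ᵥ y = u k := by rw [hy, dotProduct_single, mul_one]
  -- the cofactor linear form
  set w : Fin 3 → K := fun i =>
    u k * pol2 c (Pi.single i 1) y - u i * ev2 c y with hwdef
  have hwi : ∀ i, w i = u k * pol2 c (Pi.single i 1) y - u i * ev2 c y := fun i => rfl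
  have hkey : ∀ x, (u k) ^ 2 * ev2 c x = (u ⬝ᵥ x) * (w ⬝ᵥ x) := by
    intro x
    have hz : u ⬝ᵥ ((u k) • x + (-(u ⬝ᵥ x)) • y) = 0 := by
      rw [dotProduct_add, dotProduct_smul, dotProduct_smul, huy]
      simp [smul_eq_mul]; ring
    have hz0 : ev2 c ((u k) • x + (-(u ⬝ᵥ x)) • y) = 0 := hvan _ hz
    rw [ev2_add_smul] at hz0
    have hwx : w ⬝ᵥ x = u k * pol2 c x y - (u ⬝ᵥ x) * ev2 c y := by
      rw [dot3, hwi 0, hwi 1, hwi 2, dot3 u x, pol2_first c x y]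
      ring
    rw [hwx]
    linear_combination hz0
  have hw0 : w ≠ 0 := by
    intro hw
    apply hc
    apply ev2_zero_coeffs
    intro x
    have := hkey x
    rw [hw] at this
    simp only [zero_dotProduct, mul_zero] at this
    have huk2 : (u k) ^ 2 ≠ 0 := pow_ne_zero _ hk'
    exact (mul_eq_zero.mp this).resolve_left huk2
  have hZ : ∀ x, ev2 c x = 0 ↔ (u ⬝ᵥ x = 0 ∨ w ⬝ᵥ x = 0) := by
    intro x
    constructor
    · intro h
      have := hkey x
      rw [h, mul_zero] at this
      exact mul_eq_zero.mp this.symm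
    · rintro (h | h)
      · exact hvan x h
      · have := hkey x
        rw [h, mul_zero] at this
        have huk2 : (u k) ^ 2 ≠ 0 := pow_ne_zero _ hk'
        exact (mul_eq_zero.mp this).resolve_left huk2
  have hσev : ∀ x : Fin 3 → K, ev2 c (fun i => σ (x i)) = σ (ev2 c x) := by
    intro x
    have := ev2_comp σ c x
    rwa [show (fun i => σ (c i)) = c from funext hcσ] at this
  -- conjugated linear forms
  set uσ : Fin 3 → K := fun i => σ (u i) with huσ
  set wσ : Fin 3 → K := fun i => σ (w i) with hwσ
  have hconj_ne : ∀ t : Fin 3 → K, t ≠ 0 → (fun i => σ (t i)) ≠ 0 := by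
    intro t ht hcon
    apply ht
    funext i
    have := congrFun hcon i
    simp only [Pi.zero_apply] at this ⊢
    exact hσinj (by rwa [map_zero])
  have huσ0 : uσ ≠ 0 := hconj_ne u hu
  have hwσ0 : wσ ≠ 0 := hconj_ne w hw0
  have hdotσ : ∀ (a x : Fin 3 → K), (fun i => σ (a i)) ⬝ᵥ (fun i => σ (x i)) = σ (a ⬝ᵥ x) :=
    fun a x => dot3_comp σ a x
  -- kernels of the conjugated forms lie in the union of the two kernels
  have hin : ∀ (t : Fin 3 → K), (∀ x', t ⬝ᵥ x' = 0 → ev2 c x' = 0) →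
      ∀ x ∈ LinearMap.ker (dotL (fun i => σ (t i))),
        x ∈ LinearMap.ker (dotL u) ∨ x ∈ LinearMap.ker (dotL w) := by
    intro t htvan x hx
    rw [mem_ker_dotL] at hx
    -- preimage of x under σ
    set x' : Fin 3 → K := fun i => Classical.choose (hσsurj (x i)) with hx'
    have hx'spec : (fun i => σ (x' i)) = x := by
      funext i
      exact Classical.choose_spec (hσsurj (x i))
    have ht' : t ⬝ᵥ x' = 0 := by
      apply hσinj
      rw [← hdotσ, hx'spec, hx, map_zero]
    have hev' : ev2 c x' = 0 := htvan x' ht'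
    have : ev2 c x = 0 := by
      rw [← hx'spec, hσev, hev', map_zero]
    exact Or.imp mem_ker_dotL.mpr mem_ker_dotL.mpr ((hZ x).mp this)
  have hwvan : ∀ x', w ⬝ᵥ x' = 0 → ev2 c x' = 0 := fun x' h => (hZ x').mpr (Or.inr h)
  have hA1 : LinearMap.ker (dotL uσ) = LinearMap.ker (dotL u) ∨
      LinearMap.ker (dotL uσ) = LinearMap.ker (dotL w) := by
    rcases submodule_le_or_le (hin u hvan) with h | h
    · exact Or.inl (ker_dotL_eq_of_le huσ0 hu h)
    · exact Or.inr (ker_dotL_eq_of_le huσ0 hw0 h)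
  have hA2 : LinearMap.ker (dotL wσ) = LinearMap.ker (dotL u) ∨
      LinearMap.ker (dotL wσ) = LinearMap.ker (dotL w) := by
    rcases submodule_le_or_le (hin w hwvan) with h | h
    · exact Or.inl (ker_dotL_eq_of_le hwσ0 hu h)
    · exact Or.inr (ker_dotL_eq_of_le hwσ0 hw0 h)
  -- propagation of membership under σ
  have hPu : ∀ x : Fin 3 → K, u ⬝ᵥ x = 0 → uσ ⬝ᵥ (fun i => σ (x i)) = 0 := by
    intro x h; rw [huσ, hdotσ, h, map_zero]
  have hPw : ∀ x : Fin 3 → K, w ⬝ᵥ x = 0 → wσ ⬝ᵥ (fun i => σ (x i)) = 0 := by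
    intro x h; rw [hwσ, hdotσ, h, map_zero]
  set Ku := LinearMap.ker (dotL u)
  set Kw := LinearMap.ker (dotL w)
  set v1 : Fin 3 → K := fun i => σ (v i) with hv1
  set v2 : Fin 3 → K := fun i => σ (σ (v i)) with hv2
  have hv1σ : (fun i => σ (v1 i)) = v2 := by funext i; rfl
  have hv2σ : (fun i => σ (v2 i)) = v := by funext i; exact hσ3 (v i)
  have hKu2 : Module.finrank K Ku = 2 := finrank_ker_dotL hu
  have hKw2 : Module.finrank K Kw = 2 := finrank_ker_dotL hw0
  -- membership propagation as kernel statements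
  have stepu : ∀ x : Fin 3 → K, x ∈ Ku → (fun i => σ (x i)) ∈ LinearMap.ker (dotL uσ) := by
    intro x hx; exact mem_ker_dotL.mpr (hPu x (mem_ker_dotL.mp hx))
  have stepw : ∀ x : Fin 3 → K, x ∈ Kw → (fun i => σ (x i)) ∈ LinearMap.ker (dotL wσ) := by
    intro x hx; exact mem_ker_dotL.mpr (hPw x (mem_ker_dotL.mp hx))
  have hv_mem : v ∈ Ku ∨ v ∈ Kw := by
    rw [mem_ker_dotL (u := u), mem_ker_dotL (u := w)]
    exact (hZ v).mp hev
  -- the case dance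
  rcases hv_mem with hvu | hvw
  · rcases hA1 with e1 | e1
    · -- σ preserves Ku
      have h1 : v1 ∈ Ku := e1 ▸ stepu v hvu
      have h2 : v2 ∈ Ku := by rw [← hv1σ]; exact e1 ▸ stepu v1 h1
      exact ⟨Ku, hKu2, hvu, h1, h2⟩
    · -- ker uσ = Kw
      have h1 : v1 ∈ Kw := e1 ▸ stepu v hvu
      rcases hA2 with e2 | e2
      · -- ker wσ = Ku
        have h2 : v2 ∈ Ku := by rw [← hv1σ]; exact e2 ▸ stepw v1 h1
        have h3 : v ∈ Kw := by rw [← hv2σ]; exact e1 ▸ stepu v2 h2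
        have h4 : v1 ∈ Ku := e2 ▸ stepw v h3
        exact ⟨Ku, hKu2, hvu, h4, h2⟩
      · -- ker wσ = Kw
        have h2 : v2 ∈ Kw := by rw [← hv1σ]; exact e2 ▸ stepw v1 h1
        have h3 : v ∈ Kw := by rw [← hv2σ]; exact e2 ▸ stepw v2 h2
        exact ⟨Kw, hKw2, h3, h1, h2⟩
  · rcases hA2 with e2 | e2
    · -- ker wσ = Ku
      have h1 : v1 ∈ Ku := e2 ▸ stepw v hvw
      rcases hA1 with e1 | e1
      · have h2 : v2 ∈ Ku := by rw [← hv1σ]; exact e1 ▸ stepu v1 h1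
        have h3 : v ∈ Ku := by rw [← hv2σ]; exact e1 ▸ stepu v2 h2
        exact ⟨Ku, hKu2, h3, h1, h2⟩
      · have h2 : v2 ∈ Kw := by rw [← hv1σ]; exact e1 ▸ stepu v1 h1
        have h3 : v ∈ Ku := by rw [← hv2σ]; exact e2 ▸ stepw v2 h2
        have h4 : v1 ∈ Kw := e1 ▸ stepu v h3
        have h5 : v2 ∈ Ku := by rw [← hv1σ]; exact e2 ▸ stepw v1 h4
        exact ⟨Ku, hKu2, h3, h1, h5⟩
    · -- ker wσ = Kw
      have h1 : v1 ∈ Kw := e2 ▸ stepw v hvw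
      have h2 : v2 ∈ Kw := by rw [← hv1σ]; exact e2 ▸ stepw v1 h1
      exact ⟨Kw, hKw2, hvw, h1, h2⟩

end SpecialConic


namespace SpecialConic

section QFBridge

variable (F : Type*) [Field F]

/-- The quadratic form over `F` with coefficient vector `c`. -/
noncomputable def buildQF (c : Fin 6 → F) : QuadraticForm F (Fin 3 → F) :=
  c 0 • QuadraticMap.proj 0 0 + c 1 • QuadraticMap.proj 1 1 + c 2 • QuadraticMap.proj 2 2 +
    c 3 • QuadraticMap.proj 0 1 + c 4 • QuadraticMap.proj 0 2 + c 5 • QuadraticMap.proj 1 2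

lemma buildQF_apply (c : Fin 6 → F) (x : Fin 3 → F) : buildQF F c x = ev2 c x := by
  simp only [buildQF, ev2, QuadraticMap.add_apply, QuadraticMap.smul_apply,
    QuadraticMap.proj_apply, smul_eq_mul]
  ring

/-- The coefficient vector of a quadratic form on `F^3`. -/
noncomputable def coeffOf (Q : QuadraticForm F (Fin 3 → F)) : Fin 6 → F
  | 0 => Q (Pi.single 0 1)
  | 1 => Q (Pi.single 1 1)
  | 2 => Q (Pi.single 2 1)
  | 3 => QuadraticMap.polar Q (Pi.single 0 1) (Pi.single 1 1)
  | 4 => QuadraticMap.polar Q (Pi.single 0 1) (Pi.single 2 1)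
  | 5 => QuadraticMap.polar Q (Pi.single 1 1) (Pi.single 2 1)

lemma single_decomp (x : Fin 3 → F) :
    x = x 0 • (Pi.single 0 1 : Fin 3 → F) + x 1 • (Pi.single 1 1 : Fin 3 → F)
      + x 2 • (Pi.single 2 1 : Fin 3 → F) := by
  funext j
  fin_cases j <;> simp [Pi.single_apply]

lemma apply_eq_ev2 (Q : QuadraticForm F (Fin 3 → F)) (x : Fin 3 → F) :
    Q x = ev2 (coeffOf F Q) x := by
  have hQadd : ∀ a b : Fin 3 → F, Q (a + b) = Q a + Q b + QuadraticMap.polar Q a b := by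
    intro a b; rw [QuadraticMap.polar]; ring
  have hpolsmul : ∀ (a b : F) (s t : Fin 3 → F),
      QuadraticMap.polar Q (a • s) (b • t) = (a * b) * QuadraticMap.polar Q s t := by
    intro a b s t
    rw [QuadraticMap.polar_smul_left, QuadraticMap.polar_smul_right, smul_eq_mul, smul_eq_mul]
    ring
  conv_lhs => rw [single_decomp F x]
  rw [hQadd, hQadd, QuadraticMap.polar_add_left, QuadraticMap.map_smul, QuadraticMap.map_smul,
    QuadraticMap.map_smul, hpolsmul, hpolsmul, hpolsmul]
  simp only [ev2, coeffOf, smul_eq_mul]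
  ring

lemma coeffOf_buildQF (c : Fin 6 → F) : coeffOf F (buildQF F c) = c := by
  funext i
  fin_cases i <;>
    simp only [coeffOf, QuadraticMap.polar, buildQF_apply, ev2, Pi.add_apply, Pi.single_apply] <;>
    simp <;> ring

lemma coeffOf_zero : coeffOf F (0 : QuadraticForm F (Fin 3 → F)) = 0 := by
  funext i
  fin_cases i <;> simp [coeffOf, QuadraticMap.polar]

variable {K : Type*} [Field K] [Algebra F K]

lemma evalBaseChange_eq (Q : QuadraticForm F (Fin 3 → F)) (x : Fin 3 → K) :
    evalBaseChange F K Q x = ev2 (fun i => algebraMap F K (coeffOf F Q i)) x := by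
  rw [evalBaseChange]
  simp only [Fin.sum_univ_three]
  norm_num [ev2, coeffOf, Fin.lt_def]
  ring

lemma vanishes_mk (Q : QuadraticForm F (Fin 3 → F)) {x : Fin 3 → K} (hx : x ≠ 0)
    (h : evalBaseChange F K Q x = 0) : VanishesAt F K Q (Projectivization.mk K x hx) := by
  intro v' h' heq
  rw [Projectivization.mk_eq_mk_iff] at heq
  obtain ⟨a, ha⟩ := heq
  have hv' : v' = a⁻¹ • x := by rw [← ha, inv_smul_smul]
  rw [evalBaseChange_eq] at h ⊢
  rw [hv', Units.smul_def, ev2_smul, h, mul_zero]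

/-- a conic through four points missing a fifth one. -/
lemma T_single (p1 p2 p3 p4 p5 : Fin 3 → K)
    (hA : (crossProduct p2 p3) ⬝ᵥ p1 ≠ 0) (hB : (crossProduct p4 p5) ⬝ᵥ p1 ≠ 0) :
    ∃ cc : Fin 6 → K, ev2 cc p1 = 1 ∧ ev2 cc p2 = 0 ∧ ev2 cc p3 = 0 ∧
      ev2 cc p4 = 0 ∧ ev2 cc p5 = 0 := by
  set u := crossProduct p2 p3 with hu
  set w := crossProduct p4 p5 with hw
  set t := (u ⬝ᵥ p1) * (w ⬝ᵥ p1) with ht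
  have ht0 : t ≠ 0 := mul_ne_zero hA hB
  refine ⟨t⁻¹ • prodCoeff u w, ?_, ?_, ?_, ?_, ?_⟩ <;> rw [ev2_smulc, ev2_prodCoeff]
  · rw [← ht, inv_mul_cancel₀ ht0]
  · rw [hu, cross_dot_left]; ring
  · rw [hu, cross_dot_right]; ring
  · rw [hw, cross_dot_left]; ring
  · rw [hw, cross_dot_right]; ring

/-- evaluation at a fixed point, as a linear map in the coefficients. -/
def ev2L {R : Type*} [CommRing R] (x : Fin 3 → R) : (Fin 6 → R) →ₗ[R] R where
  toFun c := ev2 c x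
  map_add' c c' := ev2_addc c c' x
  map_smul' t c := by
    show ev2 (t • c) x = _
    rw [ev2_smulc]; rfl

@[simp] lemma ev2L_apply {R : Type*} [CommRing R] (x : Fin 3 → R) (c : Fin 6 → R) :
    ev2L x c = ev2 c x := rfl

/-- evaluation at a fixed `K`-point of coefficient vectors over `F`, `F`-linearly. -/
def ev2LF (x : Fin 3 → K) : (Fin 6 → F) →ₗ[F] K where
  toFun c := ev2 (fun i => algebraMap F K (c i)) x
  map_add' c c' := by
    show ev2 (fun i => algebraMap F K ((c + c') i)) x = _
    have h : (fun i => algebraMap F K ((c + c') i))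
        = (fun i => algebraMap F K (c i)) + fun i => algebraMap F K (c' i) := by
      funext i; simp
    rw [h, ev2_addc]
  map_smul' t c := by
    show ev2 (fun i => algebraMap F K ((t • c) i)) x = _
    have h : (fun i => algebraMap F K ((t • c) i))
        = algebraMap F K t • fun i => algebraMap F K (c i) := by
      funext i; simp [Algebra.smul_def]
    rw [h, ev2_smulc, RingHom.id_apply, Algebra.smul_def]

@[simp] lemma ev2LF_apply (x : Fin 3 → K) (c : Fin 6 → F) :
    ev2LF F x c = ev2 (fun i => algebraMap F K (c i)) x := rfl

end QFBridge

end SpecialConic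

/-- Let `P` be a point of `PG(2,q^3)` (with representative vector `v`) such that `P`, `P^q`
and `P^{q^2}` are not collinear. Then for any two distinct `F`-rational points `A` and `B`,
there is a quadratic form `Q` on `F^3`, unique up to multiplication by a nonzero scalar of
`F`, whose base change to `K` vanishes on (all representative vectors of) each of the five
points `A, B, P, P^q, P^{q^2}`; moreover the zero locus in `PG(2,K)` of the base change of
`Q` contains no three collinear points (so the conic determined by `Q` is non-degenerate). -/
theorem unique_special_conic (q : ℕ) (F K : Type*) [Field F] [Field K]
    [Algebra F K] [Fintype F] [Fintype K]
    (hF : Fintype.card F = q) (hK : Fintype.card K = q ^ 3)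
    (v : Fin 3 → K) (hv : v ≠ 0)
    (hvq : (fun i => v i ^ q) ≠ 0) (hvq2 : (fun i => v i ^ q ^ 2) ≠ 0)
    (hnc : ¬ Collinear3 K (Projectivization.mk K v hv)
      (Projectivization.mk K (fun i => v i ^ q) hvq)
      (Projectivization.mk K (fun i => v i ^ q ^ 2) hvq2))
    (A B : ℙ K (Fin 3 → K)) (hA : IsRationalPoint F K A) (hB : IsRationalPoint F K B)
    (hAB : A ≠ B) :
    ∃ Q : QuadraticForm F (Fin 3 → F), Q ≠ 0 ∧
      (VanishesAt F K Q A ∧ VanishesAt F K Q B ∧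
        VanishesAt F K Q (Projectivization.mk K v hv) ∧
        VanishesAt F K Q (Projectivization.mk K (fun i => v i ^ q) hvq) ∧
        VanishesAt F K Q (Projectivization.mk K (fun i => v i ^ q ^ 2) hvq2)) ∧
      (∀ Q' : QuadraticForm F (Fin 3 → F), Q' ≠ 0 →
        VanishesAt F K Q' A → VanishesAt F K Q' B →
        VanishesAt F K Q' (Projectivization.mk K v hv) →
        VanishesAt F K Q' (Projectivization.mk K (fun i => v i ^ q) hvq) →
        VanishesAt F K Q' (Projectivization.mk K (fun i => v i ^ q ^ 2) hvq2) →
        ∃ c : F, c ≠ 0 ∧ Q' = c • Q) ∧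
      (∀ x y z : ℙ K (Fin 3 → K), x ∈ zeroLocus F K Q → y ∈ zeroLocus F K Q →
        z ∈ zeroLocus F K Q → x ≠ y → y ≠ z → x ≠ z → ¬ Collinear3 K x y z) := by
  classical
  open SpecialConic in
  -- ### characteristic and Frobenius setup
  haveI : CharP F (ringChar F) := ringChar.charP F
  obtain ⟨n, hp, hcard⟩ := FiniteField.card F (ringChar F)
  set p := ringChar F with hpdef
  have hq : q = p ^ (n : ℕ) := by rw [← hF, hcard]
  haveI hpK : CharP K p := charP_of_injective_algebraMap (algebraMap F K).injective p
  haveI := Fact.mk hp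
  set σ : K →+* K := iterateFrobenius K p n with hσdef
  have hσx : ∀ x : K, σ x = x ^ q := fun x => by rw [hσdef, iterateFrobenius_def, hq]
  have hq2 : 2 ≤ q := by rw [← hF]; exact Fintype.one_lt_card
  have hσ3 : ∀ t : K, σ (σ (σ t)) = t := by
    intro t
    rw [hσx, hσx, hσx, ← pow_mul, ← pow_mul]
    have h3 : q * (q * q) = q ^ 3 := by ring
    rw [h3, ← hK]
    exact FiniteField.pow_card t
  have hσalg : ∀ t : F, σ (algebraMap F K t) = algebraMap F K t := by
    intro t
    rw [hσx, ← map_pow, ← hF, FiniteField.pow_card]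
  -- ### conjugate vectors
  set sv : Fin 3 → K := fun i => σ (v i) with hsvdef
  set ssv : Fin 3 → K := fun i => σ (σ (v i)) with hssvdef
  have hσvec1 : (fun i => σ (v i)) = sv := rfl
  have hσvec2 : (fun i => σ (sv i)) = ssv := rfl
  have hσvec3 : (fun i => σ (ssv i)) = v := funext fun i => hσ3 (v i)
  have hsv_eq : (fun i => v i ^ q) = sv := funext fun i => (hσx (v i)).symm
  have hssv_eq : (fun i => v i ^ q ^ 2) = ssv := by
    funext i
    rw [hssvdef]
    simp only
    rw [hσx, hσx, ← pow_mul, pow_two]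
  have hsv0 : sv ≠ 0 := by rw [← hsv_eq]; exact hvq
  have hssv0 : ssv ≠ 0 := by rw [← hssv_eq]; exact hvq2
  have hmk_sv : Projectivization.mk K (fun i => v i ^ q) hvq = Projectivization.mk K sv hsv0 :=
    SpecialConic.mk_congr hvq hsv_eq
  have hmk_ssv : Projectivization.mk K (fun i => v i ^ q ^ 2) hvq2
      = Projectivization.mk K ssv hssv0 := SpecialConic.mk_congr hvq2 hssv_eq
  rw [hmk_sv, hmk_ssv] at hnc
  -- ### the cyclic perpendicularity contradiction
  have hcyc : ∀ u : Fin 3 → K, u ≠ 0 → (fun i => σ (u i)) = u →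
      (u ⬝ᵥ v = 0 ∨ u ⬝ᵥ sv = 0 ∨ u ⬝ᵥ ssv = 0) → False := by
    intro u hu hufix hone
    have hstep : ∀ y : Fin 3 → K, u ⬝ᵥ y = 0 → u ⬝ᵥ (fun i => σ (y i)) = 0 := by
      intro y hy
      have h := SpecialConic.dot3_comp σ u y
      rw [hufix] at h
      rw [h, hy, map_zero]
    have hall : u ⬝ᵥ v = 0 ∧ u ⬝ᵥ sv = 0 ∧ u ⬝ᵥ ssv = 0 := by
      rcases hone with h | h | h
      · have h2 := hstep v h
        rw [hσvec1] at h2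
        have h3 := hstep sv h2
        rw [hσvec2] at h3
        exact ⟨h, h2, h3⟩
      · have h3 := hstep sv h
        rw [hσvec2] at h3
        have h1 := hstep ssv h3
        rw [hσvec3] at h1
        exact ⟨h1, h, h3⟩
      · have h1 := hstep ssv h
        rw [hσvec3] at h1
        have h2 := hstep v h1
        rw [hσvec1] at h2
        exact ⟨h1, h2, h⟩
    exact hnc (SpecialConic.collinear3_of_dot_eq_zero hu hv hsv0 hssv0
      hall.1 hall.2.1 hall.2.2)
  -- ### rational point data
  obtain ⟨vA, hvAr, hvA0, hAeq⟩ := hA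
  obtain ⟨vB, hvBr, hvB0, hBeq⟩ := hB
  have haFspec : ∀ i, algebraMap F K ((hvAr i).choose) = vA i := fun i => (hvAr i).choose_spec
  have hbFspec : ∀ i, algebraMap F K ((hvBr i).choose) = vB i := fun i => (hvBr i).choose_spec
  set aF : Fin 3 → F := fun i => (hvAr i).choose with haFdef
  set bF : Fin 3 → F := fun i => (hvBr i).choose with hbFdef
  have hvAfix : (fun i => σ (vA i)) = vA := funext fun i => by rw [← haFspec i, hσalg]
  have hvBfix : (fun i => σ (vB i)) = vB := funext fun i => by rw [← hbFspec i, hσalg]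
  -- ### the six determinant conditions
  have hd1 : Matrix.det ![v, sv, ssv] ≠ 0 := by
    intro h0
    exact hnc (SpecialConic.collinear3_of_det_zero hv hsv0 hssv0 h0)
  have hdR : ∀ r : Fin 3 → K, r ≠ 0 → (fun i => σ (r i)) = r →
      Matrix.det ![r, sv, ssv] ≠ 0 := by
    intro r hr0 hrfix h0
    have hcs : crossProduct sv ssv ≠ 0 := by
      intro hcr
      rcases SpecialConic.cross_eq_zero_cases sv ssv hcr with h' | ⟨cc, hcc⟩
      · exact hsv0 h'
      · exact hd1 (SpecialConic.det3_prop23 v sv cc ssv hcc)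
    have hu30 : crossProduct v sv ≠ 0 := by
      intro hcr
      rcases SpecialConic.cross_eq_zero_cases v sv hcr with h' | ⟨cc, hcc⟩
      · exact hv h'
      · exact hd1 (SpecialConic.det3_prop12 v sv cc hcc ssv)
    have hr1 : (crossProduct sv ssv) ⬝ᵥ r = 0 := by
      rw [SpecialConic.cross_dot]; exact h0
    have hvnot : (crossProduct sv ssv) ⬝ᵥ v ≠ 0 := by
      rw [SpecialConic.cross_dot]; exact hd1
    have hu2 : (fun i => σ (crossProduct sv ssv i)) = crossProduct ssv v := by
      have h := SpecialConic.cross_comp σ sv ssv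
      rw [hσvec2, hσvec3] at h
      exact h.symm
    have hu3 : (fun i => σ (crossProduct ssv v i)) = crossProduct v sv := by
      have h := SpecialConic.cross_comp σ ssv v
      rw [hσvec3, hσvec1] at h
      exact h.symm
    have hr2 : (crossProduct ssv v) ⬝ᵥ r = 0 := by
      have h := SpecialConic.dot3_comp σ (crossProduct sv ssv) r
      rw [hu2, hrfix] at h
      rw [h, hr1, map_zero]
    have hr3 : (crossProduct v sv) ⬝ᵥ r = 0 := by
      have h := SpecialConic.dot3_comp σ (crossProduct ssv v) r
      rw [hu3, hrfix] at h
      rw [h, hr2, map_zero]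
    by_cases heq : LinearMap.ker (SpecialConic.dotL (crossProduct sv ssv))
        = LinearMap.ker (SpecialConic.dotL (crossProduct v sv))
    · have hv3 : v ∈ LinearMap.ker (SpecialConic.dotL (crossProduct v sv)) :=
        SpecialConic.mem_ker_dotL.mpr (SpecialConic.cross_dot_left v sv)
      rw [← heq] at hv3
      exact hvnot (SpecialConic.mem_ker_dotL.mp hv3)
    · have hinf := SpecialConic.inf_dim_one (SpecialConic.finrank_ker_dotL hcs)
        (SpecialConic.finrank_ker_dotL hu30) heq
      have hrmem : r ∈ LinearMap.ker (SpecialConic.dotL (crossProduct sv ssv)) ⊓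
          LinearMap.ker (SpecialConic.dotL (crossProduct v sv)) :=
        ⟨SpecialConic.mem_ker_dotL.mpr hr1, SpecialConic.mem_ker_dotL.mpr hr3⟩
      have hsvmem : sv ∈ LinearMap.ker (SpecialConic.dotL (crossProduct sv ssv)) ⊓
          LinearMap.ker (SpecialConic.dotL (crossProduct v sv)) :=
        ⟨SpecialConic.mem_ker_dotL.mpr (SpecialConic.cross_dot_left sv ssv),
          SpecialConic.mem_ker_dotL.mpr (SpecialConic.cross_dot_right v sv)⟩
      obtain ⟨cc, hcc⟩ := SpecialConic.one_dim_prop hinf hsvmem hrmem hsv0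
      have hccne : cc ≠ 0 := by
        intro h
        rw [h, zero_smul] at hcc
        exact hr0 hcc
      have hσcc : r = σ cc • ssv := by
        have h : (fun i : Fin 3 => σ (r i)) = fun i => σ ((cc • sv) i) := by rw [← hcc]
        rw [hrfix] at h
        rw [h]
        funext i
        simp only [Pi.smul_apply, smul_eq_mul, _root_.map_mul]
        exact congrArg _ (congrFun hσvec2 i)
      have hσccne : σ cc ≠ 0 := fun h => hccne (σ.injective (by rwa [map_zero]))
      have hprop : ssv = (cc / σ cc) • sv := by
        funext i
        have h1 := congrFun hcc i
        have h2 := congrFun hσcc i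
        simp only [Pi.smul_apply, smul_eq_mul] at h1 h2 ⊢
        rw [div_mul_eq_mul_div, eq_div_iff hσccne]
        linear_combination h1 - h2
      exact hd1 (SpecialConic.det3_prop23 v sv (cc / σ cc) ssv hprop)
  have hd2 : ∀ X : Fin 3 → K, (X = v ∨ X = sv ∨ X = ssv) →
      Matrix.det ![vA, vB, X] ≠ 0 := by
    intro X hX h0
    have hcAB : crossProduct vA vB ≠ 0 := by
      intro hcr
      rcases SpecialConic.cross_eq_zero_cases vA vB hcr with h' | ⟨cc, hcc⟩
      · exact hvA0 h'
      · apply hAB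
        rw [hAeq, hBeq]
        exact (SpecialConic.mk_eq_of_smul hvA0 hvB0 hcc).symm
    have hufix : (fun i => σ (crossProduct vA vB i)) = crossProduct vA vB := by
      have h := SpecialConic.cross_comp σ vA vB
      rw [hvAfix, hvBfix] at h
      exact h.symm
    have huX : (crossProduct vA vB) ⬝ᵥ X = 0 := by
      rw [SpecialConic.cross_dot]
      rw [SpecialConic.det3_expand] at h0 ⊢
      linear_combination h0
    apply hcyc (crossProduct vA vB) hcAB hufix
    rcases hX with rfl | rfl | rfl
    · exact Or.inl huX
    · exact Or.inr (Or.inl huX)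
    · exact Or.inr (Or.inr huX)
  -- ### existence of the coefficient vector over F
  have hfrk : Module.finrank F K = 3 := by
    have hcard2 : Fintype.card K = Fintype.card F ^ Module.finrank F K := Module.card_eq_pow_finrank
    rw [hF, hK] at hcard2
    exact (Nat.pow_right_injective hq2 hcard2.symm)
  obtain ⟨c, hc0, hca, hcb, hchv⟩ :
      ∃ c : Fin 6 → F, c ≠ 0 ∧ SpecialConic.ev2 c aF = 0 ∧ SpecialConic.ev2 c bF = 0 ∧
        SpecialConic.ev2 (fun i => algebraMap F K (c i)) v = 0 := by
    set Φ : (Fin 6 → F) →ₗ[F] (Fin 2 → F) × K :=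
      (LinearMap.pi (fun j : Fin 2 => SpecialConic.ev2L (![aF, bF] j))).prod
        (SpecialConic.ev2LF F v) with hΦdef
    have hker : ∃ cF : Fin 6 → F, cF ≠ 0 ∧ Φ cF = 0 := by
      by_contra hcon
      push_neg at hcon
      have hinj : Function.Injective Φ := by
        rw [← LinearMap.ker_eq_bot, Submodule.eq_bot_iff]
        intro cF hcF
        by_contra hne
        exact hcon cF hne (LinearMap.mem_ker.mp hcF)
      have hle := LinearMap.finrank_le_finrank_of_injective hinj
      rw [Module.finrank_pi, Module.finrank_prod, Module.finrank_pi, hfrk] at hle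
      simp [Fintype.card_fin] at hle
    obtain ⟨cF, hcF0, hcFΦ⟩ := hker
    rw [hΦdef] at hcFΦ
    have h1 := congrArg Prod.fst hcFΦ
    have h2 := congrArg Prod.snd hcFΦ
    simp only [LinearMap.prod_apply, Pi.prod] at h1 h2
    refine ⟨cF, hcF0, ?_, ?_, ?_⟩
    · have := congrFun h1 0
      simpa using this
    · have := congrFun h1 1
      simpa using this
    · simpa using h2
  set amap := algebraMap F K with hamapdef
  set ch : Fin 6 → K := fun i => amap (c i) with hchdef
  have hchσ : ∀ i, σ (ch i) = ch i := fun i => hσalg (c i)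
  have hch0 : ch ≠ 0 := by
    intro h
    apply hc0
    funext i
    have := congrFun h i
    simp only [hchdef, Pi.zero_apply] at this ⊢
    exact (algebraMap F K).injective (by rwa [map_zero])
  have hchsv : SpecialConic.ev2 ch sv = 0 := by
    have h := SpecialConic.ev2_comp σ ch v
    rw [show (fun i => σ (ch i)) = ch from funext hchσ, hσvec1] at h
    rw [h, hchv, map_zero]
  have hchssv : SpecialConic.ev2 ch ssv = 0 := by
    have h := SpecialConic.ev2_comp σ ch sv
    rw [show (fun i => σ (ch i)) = ch from funext hchσ, hσvec2] at h
    rw [h, hchsv, map_zero]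
  have hvAdef : vA = fun i => amap (aF i) := funext fun i => (haFspec i).symm
  have hvBdef : vB = fun i => amap (bF i) := funext fun i => (hbFspec i).symm
  have hchvA : SpecialConic.ev2 ch vA = 0 := by
    have h := SpecialConic.ev2_comp (amap : F →+* K) c aF
    rw [hca, map_zero] at h
    rw [hchdef, hvAdef]
    exact h
  have hchvB : SpecialConic.ev2 ch vB = 0 := by
    have h := SpecialConic.ev2_comp (amap : F →+* K) c bF
    rw [hcb, map_zero] at h
    rw [hchdef, hvBdef]
    exact h
  -- ### the quadratic form
  set Q : QuadraticForm F (Fin 3 → F) := SpecialConic.buildQF F c with hQdef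
  have hQcoeff : SpecialConic.coeffOf F Q = c := SpecialConic.coeffOf_buildQF F c
  have hebc : ∀ x : Fin 3 → K, evalBaseChange F K Q x = SpecialConic.ev2 ch x := by
    intro x
    rw [SpecialConic.evalBaseChange_eq, hQcoeff]
  have hQ0 : Q ≠ 0 := by
    intro h
    apply hc0
    rw [← hQcoeff, h, SpecialConic.coeffOf_zero]
  -- ### the five vanishing statements
  have hvanA : VanishesAt F K Q A := by
    rw [hAeq]
    exact SpecialConic.vanishes_mk F Q hvA0 (by rw [hebc]; exact hchvA)
  have hvanB : VanishesAt F K Q B := by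
    rw [hBeq]
    exact SpecialConic.vanishes_mk F Q hvB0 (by rw [hebc]; exact hchvB)
  have hvanP : VanishesAt F K Q (Projectivization.mk K v hv) :=
    SpecialConic.vanishes_mk F Q hv (by rw [hebc]; exact hchv)
  have hvanPq : VanishesAt F K Q (Projectivization.mk K (fun i => v i ^ q) hvq) := by
    rw [hmk_sv]
    exact SpecialConic.vanishes_mk F Q hsv0 (by rw [hebc]; exact hchsv)
  have hvanPq2 : VanishesAt F K Q (Projectivization.mk K (fun i => v i ^ q ^ 2) hvq2) := by
    rw [hmk_ssv]
    exact SpecialConic.vanishes_mk F Q hssv0 (by rw [hebc]; exact hchssv)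
  -- ### the kernel of the evaluation map at the five points is 1-dimensional
  have hker1 : ∀ cc : Fin 6 → K, SpecialConic.ev2 cc vA = 0 → SpecialConic.ev2 cc vB = 0 →
      SpecialConic.ev2 cc v = 0 → SpecialConic.ev2 cc sv = 0 → SpecialConic.ev2 cc ssv = 0 →
      ∃ lam : K, cc = lam • ch := by
    intro cc hc1 hc2 hc3 hc4 hc5
    set pts : Fin 5 → (Fin 3 → K) := ![vA, vB, v, sv, ssv] with hptsdef
    set T : (Fin 6 → K) →ₗ[K] (Fin 5 → K) :=
      LinearMap.pi (fun j => SpecialConic.ev2L (pts j)) with hTdef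
    have hTapp : ∀ (c5 : Fin 6 → K) (j : Fin 5), T c5 j = SpecialConic.ev2 c5 (pts j) :=
      fun _ _ => rfl
    have hp0 : pts 0 = vA := rfl
    have hp1 : pts 1 = vB := rfl
    have hp2 : pts 2 = v := rfl
    have hp3 : pts 3 = sv := rfl
    have hp4 : pts 4 = ssv := rfl
    have hsingle : ∀ j : Fin 5, ∃ cc5 : Fin 6 → K, T cc5 = Pi.single j 1 := by
      intro j
      fin_cases j
      · obtain ⟨cc5, e1, e2, e3, e4, e5⟩ := SpecialConic.T_single vA vB v sv ssv
          (by rw [SpecialConic.cross_dot]; exact hd2 v (Or.inl rfl))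
          (by rw [SpecialConic.cross_dot]; exact hdR vA hvA0 hvAfix)
        refine ⟨cc5, ?_⟩
        funext k
        fin_cases k <;>
          simp [hTapp, hp0, hp1, hp2, hp3, hp4, Pi.single_apply, e1, e2, e3, e4, e5]
      · obtain ⟨cc5, e1, e2, e3, e4, e5⟩ := SpecialConic.T_single vB vA v sv ssv
          (by
            rw [SpecialConic.cross_dot, SpecialConic.det3_swap12]
            exact neg_ne_zero.mpr (hd2 v (Or.inl rfl)))
          (by rw [SpecialConic.cross_dot]; exact hdR vB hvB0 hvBfix)
        refine ⟨cc5, ?_⟩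
        funext k
        fin_cases k <;>
          simp [hTapp, hp0, hp1, hp2, hp3, hp4, Pi.single_apply, e1, e2, e3, e4, e5]
      · obtain ⟨cc5, e1, e2, e3, e4, e5⟩ := SpecialConic.T_single v vA vB sv ssv
          (by
            rw [SpecialConic.cross_dot, SpecialConic.det3_cycle]
            exact hd2 v (Or.inl rfl))
          (by rw [SpecialConic.cross_dot]; exact hd1)
        refine ⟨cc5, ?_⟩
        funext k
        fin_cases k <;>
          simp [hTapp, hp0, hp1, hp2, hp3, hp4, Pi.single_apply, e1, e2, e3, e4, e5]
      · obtain ⟨cc5, e1, e2, e3, e4, e5⟩ := SpecialConic.T_single sv vA vB v ssv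
          (by
            rw [SpecialConic.cross_dot, SpecialConic.det3_cycle]
            exact hd2 sv (Or.inr (Or.inl rfl)))
          (by
            rw [SpecialConic.cross_dot, SpecialConic.det3_swap12]
            exact neg_ne_zero.mpr hd1)
        refine ⟨cc5, ?_⟩
        funext k
        fin_cases k <;>
          simp [hTapp, hp0, hp1, hp2, hp3, hp4, Pi.single_apply, e1, e2, e3, e4, e5]
      · obtain ⟨cc5, e1, e2, e3, e4, e5⟩ := SpecialConic.T_single ssv vA vB v sv
          (by
            rw [SpecialConic.cross_dot, SpecialConic.det3_cycle]
            exact hd2 ssv (Or.inr (Or.inr rfl)))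
          (by
            rw [SpecialConic.cross_dot, SpecialConic.det3_cycle]
            exact hd1)
        refine ⟨cc5, ?_⟩
        funext k
        fin_cases k <;>
          simp [hTapp, hp0, hp1, hp2, hp3, hp4, Pi.single_apply, e1, e2, e3, e4, e5]
    have hTsurj : Function.Surjective T := by
      intro yv
      choose cs hcs using hsingle
      refine ⟨∑ j, yv j • cs j, ?_⟩
      rw [map_sum]
      simp_rw [LinearMap.map_smul, hcs]
      funext k
      simp only [Finset.sum_apply, Pi.smul_apply, Pi.single_apply, smul_eq_mul, mul_ite,
        mul_one, mul_zero]
      rw [Finset.sum_ite_eq]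
      simp
    have hkerT : Module.finrank K (LinearMap.ker T) = 1 := by
      have h := LinearMap.finrank_range_add_finrank_ker T
      rw [LinearMap.range_eq_top.mpr hTsurj, finrank_top] at h
      simp only [Module.finrank_pi, Fintype.card_fin] at h
      omega
    have hchker : ch ∈ LinearMap.ker T := by
      rw [LinearMap.mem_ker]
      funext j
      fin_cases j <;>
        simp [hTapp, hp0, hp1, hp2, hp3, hp4, hchvA, hchvB, hchv, hchsv, hchssv]
    have hccker : cc ∈ LinearMap.ker T := by
      rw [LinearMap.mem_ker]
      funext j
      fin_cases j <;>
        simp [hTapp, hp0, hp1, hp2, hp3, hp4, hc1, hc2, hc3, hc4, hc5]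
    exact SpecialConic.one_dim_prop hkerT hchker hccker hch0
  refine ⟨Q, hQ0, ⟨hvanA, hvanB, hvanP, hvanPq, hvanPq2⟩, ?_, ?_⟩
  · -- ### uniqueness
    intro Q' hQ'0 hA' hB' hP' hPq' hPq2'
    set c' : Fin 6 → F := SpecialConic.coeffOf F Q' with hc'def
    set ch' : Fin 6 → K := fun i => amap (c' i) with hch'def
    have hQ'x : ∀ x : Fin 3 → K, evalBaseChange F K Q' x = SpecialConic.ev2 ch' x := fun x =>
      SpecialConic.evalBaseChange_eq F Q' x
    have e1 : SpecialConic.ev2 ch' vA = 0 := by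
      rw [← hQ'x]; exact hA' vA hvA0 hAeq
    have e2 : SpecialConic.ev2 ch' vB = 0 := by
      rw [← hQ'x]; exact hB' vB hvB0 hBeq
    have e3 : SpecialConic.ev2 ch' v = 0 := by
      rw [← hQ'x]; exact hP' v hv rfl
    have e4 : SpecialConic.ev2 ch' sv = 0 := by
      rw [← hQ'x]; exact hPq' sv hsv0 hmk_sv
    have e5 : SpecialConic.ev2 ch' ssv = 0 := by
      rw [← hQ'x]; exact hPq2' ssv hssv0 hmk_ssv
    obtain ⟨lam, hlam⟩ := hker1 ch' e1 e2 e3 e4 e5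
    obtain ⟨i0, hi0⟩ := Function.ne_iff.mp hc0
    have hi0' : c i0 ≠ 0 := by simpa using hi0
    have hamapne : amap (c i0) ≠ 0 := by
      simpa using (map_ne_zero (algebraMap F K)).mpr hi0'
    set d : F := c' i0 / c i0 with hddef
    have hcomp : ∀ j, amap (c' j) = lam * amap (c j) := by
      intro j
      have := congrFun hlam j
      simpa [hch'def, hchdef, Pi.smul_apply, smul_eq_mul] using this
    have hlamd : lam = amap d := by
      have h := hcomp i0
      rw [hddef, map_div₀, eq_div_iff hamapne]
      exact h.symm
    have hc'j : ∀ j, c' j = d * c j := by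
      intro j
      apply (algebraMap F K).injective
      rw [_root_.map_mul]
      rw [← hamapdef, hcomp j, hlamd]
    have hd0 : d ≠ 0 := by
      intro h
      apply hQ'0
      ext x
      rw [SpecialConic.apply_eq_ev2 F Q' x, ← hc'def]
      have : c' = 0 := by funext j; simp [hc'j j, h]
      rw [this]
      simp [SpecialConic.ev2]
    refine ⟨d, hd0, ?_⟩
    ext x
    rw [SpecialConic.apply_eq_ev2 F Q' x, ← hc'def]
    have hxc : SpecialConic.ev2 c' x = d * SpecialConic.ev2 c x := by
      have : c' = d • c := funext fun j => by rw [hc'j j]; rfl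
      rw [this, SpecialConic.ev2_smulc]
    rw [hxc]
    have : (d • Q) x = d * Q x := rfl
    rw [this, SpecialConic.apply_eq_ev2 F Q x, hQcoeff]
  · -- ### no three collinear points in the zero locus
    intro x y z hxZ hyZ hzZ hxy hyz hxz hcol
    obtain ⟨W, hW2, hxW, hyW, hzW⟩ := hcol
    set rx := x.rep with hrxdef
    set ry := y.rep with hrydef
    set rz := z.rep with hrzdef
    have hrx0 : rx ≠ 0 := x.rep_nonzero
    have hry0 : ry ≠ 0 := y.rep_nonzero
    have hrz0 : rz ≠ 0 := z.rep_nonzero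
    have hxmk : x = Projectivization.mk K rx hrx0 := (Projectivization.mk_rep x).symm
    have hymk : y = Projectivization.mk K ry hry0 := (Projectivization.mk_rep y).symm
    have hzmk : z = Projectivization.mk K rz hrz0 := (Projectivization.mk_rep z).symm
    have hmem : ∀ t : ℙ K (Fin 3 → K), t ∈ linePoints K W → t.rep ∈ W := by
      intro t ht
      have h1 : t.submodule ≤ W := ht
      have h2 : t.submodule = Submodule.span K {t.rep} := by
        conv_lhs => rw [← Projectivization.mk_rep t]
        rw [Projectivization.submodule_mk]
      rw [h2] at h1
      exact (Submodule.span_singleton_le_iff_mem _ _).mp h1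
    have hrxW : rx ∈ W := hmem x hxW
    have hryW : ry ∈ W := hmem y hyW
    have hrzW : rz ∈ W := hmem z hzW
    have hxyrep : ∀ ccc : K, ry ≠ ccc • rx := by
      intro ccc h
      exact hxy (by
        rw [hxmk, hymk]
        exact (SpecialConic.mk_eq_of_smul hrx0 hry0 h).symm)
    have ex : SpecialConic.ev2 ch rx = 0 := by rw [← hebc]; exact hxZ rx hrx0 hxmk
    have ey : SpecialConic.ev2 ch ry = 0 := by rw [← hebc]; exact hyZ ry hry0 hymk
    have ez : SpecialConic.ev2 ch rz = 0 := by rw [← hebc]; exact hzZ rz hrz0 hzmk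
    have hcr : crossProduct rx ry ≠ 0 := by
      intro h
      rcases SpecialConic.cross_eq_zero_cases rx ry h with h' | ⟨ccc, hccc⟩
      · exact hrx0 h'
      · exact hxyrep ccc hccc
    have hurx : (crossProduct rx ry) ⬝ᵥ rx = 0 := SpecialConic.cross_dot_left rx ry
    have hury : (crossProduct rx ry) ⬝ᵥ ry = 0 := SpecialConic.cross_dot_right rx ry
    have hli : LinearIndependent K ![rx, ry] := by
      rw [linearIndependent_fin2]
      constructor
      · simpa using hry0
      · intro a ha
        simp only [Matrix.cons_val_one, Matrix.head_cons, Matrix.cons_val_zero] at ha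
        have ha0 : a ≠ 0 := by
          intro h0
          rw [h0, zero_smul] at ha
          exact hrx0 ha.symm
        apply hxyrep a⁻¹
        rw [← ha, inv_smul_smul₀ ha0]
    have hrange : Set.range ![rx, ry] = {rx, ry} := by
      apply Set.eq_of_subset_of_subset
      · rintro t ⟨j, rfl⟩
        fin_cases j
        · exact Set.mem_insert _ _
        · exact Set.mem_insert_of_mem _ rfl
      · rintro t (rfl | rfl)
        · exact ⟨0, rfl⟩
        · exact ⟨1, rfl⟩
    have hsp2 : Module.finrank K (Submodule.span K (Set.range ![rx, ry])) = 2 := by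
      rw [finrank_span_eq_card hli, Fintype.card_fin]
    have hspW : Submodule.span K (Set.range ![rx, ry]) ≤ W := by
      rw [Submodule.span_le, hrange]
      rintro t (rfl | rfl)
      · exact hrxW
      · exact hryW
    have hWeq : Submodule.span K (Set.range ![rx, ry]) = W :=
      Submodule.eq_of_le_of_finrank_le hspW (by rw [hW2, hsp2])
    have hspker : Submodule.span K (Set.range ![rx, ry])
        ≤ LinearMap.ker (SpecialConic.dotL (crossProduct rx ry)) := by
      rw [Submodule.span_le, hrange]
      rintro t (rfl | rfl)
      · exact SpecialConic.mem_ker_dotL.mpr hurx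
      · exact SpecialConic.mem_ker_dotL.mpr hury
    have hkerEq : Submodule.span K (Set.range ![rx, ry])
        = LinearMap.ker (SpecialConic.dotL (crossProduct rx ry)) :=
      Submodule.eq_of_le_of_finrank_le hspker
        (by rw [SpecialConic.finrank_ker_dotL hcr, hsp2])
    have hrzspan : rz ∈ Submodule.span K ({rx, ry} : Set (Fin 3 → K)) := by
      rw [← hrange, hWeq]
      exact hrzW
    obtain ⟨s, t, hst⟩ := Submodule.mem_span_pair.mp hrzspan
    have hzeval : s * t * SpecialConic.pol2 ch rx ry = 0 := by
      have h := SpecialConic.ev2_add_smul ch s t rx ry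
      rw [hst, ez, ex, ey] at h
      linear_combination -h
    have hs0 : s ≠ 0 := by
      intro h
      rw [h, zero_smul, zero_add] at hst
      exact hyz (by
        rw [hymk, hzmk]
        exact (SpecialConic.mk_eq_of_smul hry0 hrz0 hst.symm).symm)
    have ht0 : t ≠ 0 := by
      intro h
      rw [h, zero_smul, add_zero] at hst
      exact hxz (by
        rw [hxmk, hzmk]
        exact (SpecialConic.mk_eq_of_smul hrx0 hrz0 hst.symm).symm)
    have hpol : SpecialConic.pol2 ch rx ry = 0 := by
      have := mul_eq_zero.mp hzeval
      rcases this with h | h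
      · exact absurd (mul_eq_zero.mp h) (by simp [hs0, ht0])
      · exact h
    have hvanker : ∀ w' : Fin 3 → K, (crossProduct rx ry) ⬝ᵥ w' = 0 →
        SpecialConic.ev2 ch w' = 0 := by
      intro w' hw'
      have hmem' : w' ∈ Submodule.span K ({rx, ry} : Set (Fin 3 → K)) := by
        rw [← hrange, hkerEq]
        exact SpecialConic.mem_ker_dotL.mpr hw'
      obtain ⟨s', t', hst'⟩ := Submodule.mem_span_pair.mp hmem'
      rw [← hst', SpecialConic.ev2_add_smul, ex, ey, hpol]
      ring
    obtain ⟨W', hW'2, hvW', hsvW', hssvW'⟩ :=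
      SpecialConic.engine σ hσ3 hch0 hchσ hcr hvanker hchv
    exact hnc (SpecialConic.collinear3_of_mem hW'2 hv hsv0 hssv0 hvW' hsvW' hssvW')
end

section
/- Let P be a point of PG(2,q^3) such that P, P^q and P^{q^2} are not collinear. Then the number of distinct subsets C of PG(2,q^3) such that C is the zero locus of the base change to K of some nonzero quadratic form on F^3 and P ∈ C, is exactly q^2+q+1. -/
open scoped LinearAlgebra.Projectivization

section A
variable {F K : Type*} [Field F] [Field K] [Algebra F K]

/-- coefficient matrix over F -/
noncomputable def cmatF (Q : QuadraticForm F (Fin 3 → F)) : Matrix (Fin 3) (Fin 3) F :=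
  fun i j => if i = j then Q (Pi.single i 1)
    else if i < j then QuadraticMap.polar Q (Pi.single i 1) (Pi.single j 1) else 0

noncomputable def QK (F K : Type*) [Field F] [Field K] [Algebra F K]
    (Q : QuadraticForm F (Fin 3 → F)) : QuadraticForm K (Fin 3 → K) :=
  (Matrix.toQuadraticMap' ((algebraMap F K).mapMatrix (cmatF Q)))

lemma QK_apply (Q : QuadraticForm F (Fin 3 → F)) (w : Fin 3 → K) :
    QK F K Q w = ∑ i, ∑ j, w i * w j * algebraMap F K (cmatF Q i j) := by
  simp only [QK, Matrix.toQuadraticMap', Matrix.toQuadraticForm', LinearMap.BilinMap.toQuadraticMap_apply,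
    Matrix.toLinearMap₂'_apply, RingHom.mapMatrix_apply, Matrix.map_apply, smul_eq_mul,
    mul_assoc]

lemma QK_eq_eval (Q : QuadraticForm F (Fin 3 → F)) (w : Fin 3 → K) :
    QK F K Q w = evalBaseChange F K Q w := by
  rw [QK_apply]
  simp only [evalBaseChange, Fin.sum_univ_three, cmatF]
  norm_num [Fin.lt_def, Fin.ext_iff]
  ring

/-- General 3-term expansion of a quadratic map. -/
lemma expand3 {R M : Type*} [CommRing R] [AddCommGroup M] [Module R M]
    (G : QuadraticMap R M R) (x y z : R) (α β γ : M) :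
    G (x • α + y • β + z • γ) = x * x * G α + y * y * G β + z * z * G γ
      + x * y * QuadraticMap.polar G α β + x * z * QuadraticMap.polar G α γ
      + y * z * QuadraticMap.polar G β γ := by
  have h : ∀ u w : M, G (u + w) = G u + G w + QuadraticMap.polar G u w := by
    intro u w; rw [QuadraticMap.polar]; ring
  rw [h _ (z • γ), h (x • α) (y • β)]
  simp only [QuadraticMap.polar_add_left, QuadraticMap.polar_add_right,
    QuadraticMap.polar_smul_left, QuadraticMap.polar_smul_right, QuadraticMap.map_smul,
    smul_eq_mul]
  ring

lemma decomp3 {R : Type*} [CommRing R] (x : Fin 3 → R) :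
    x = x 0 • (Pi.single 0 1 : Fin 3 → R) + x 1 • (Pi.single 1 1 : Fin 3 → R) + x 2 • (Pi.single 2 1 : Fin 3 → R) := by
  funext i
  fin_cases i <;> simp

lemma qm_expansion {R : Type*} [CommRing R] (G : QuadraticMap R (Fin 3 → R) R) (x : Fin 3 → R) :
    G x = x 0 * x 0 * G (Pi.single 0 1) + x 1 * x 1 * G (Pi.single 1 1)
      + x 2 * x 2 * G (Pi.single 2 1)
      + x 0 * x 1 * QuadraticMap.polar G (Pi.single 0 1) (Pi.single 1 1)
      + x 0 * x 2 * QuadraticMap.polar G (Pi.single 0 1) (Pi.single 2 1)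
      + x 1 * x 2 * QuadraticMap.polar G (Pi.single 1 1) (Pi.single 2 1) := by
  conv_lhs => rw [decomp3 x, expand3]

lemma qm_ext3 {R : Type*} [CommRing R] (G₁ G₂ : QuadraticMap R (Fin 3 → R) R)
    (hd : ∀ i, G₁ (Pi.single i 1) = G₂ (Pi.single i 1))
    (hp : ∀ i j, i < j → QuadraticMap.polar G₁ (Pi.single i 1) (Pi.single j 1)
        = QuadraticMap.polar G₂ (Pi.single i 1) (Pi.single j 1)) :
    G₁ = G₂ := by
  ext x
  rw [qm_expansion G₁, qm_expansion G₂, hd 0, hd 1, hd 2, hp 0 1 (by decide),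
    hp 0 2 (by decide), hp 1 2 (by decide)]

end A

section B
variable {F K : Type*} [Field F] [Field K] [Algebra F K]

lemma tqm_single {R : Type*} [CommRing R] (M : Matrix (Fin 3) (Fin 3) R) (i : Fin 3) :
    M.toQuadraticMap' (Pi.single i 1) = M i i := by
  simp only [Matrix.toQuadraticMap', Matrix.toQuadraticForm', LinearMap.BilinMap.toQuadraticMap_apply,
    Matrix.toLinearMap₂'_apply, smul_eq_mul]
  fin_cases i <;> simp [Fin.sum_univ_three]

lemma tqm_polar {R : Type*} [CommRing R] (M : Matrix (Fin 3) (Fin 3) R) (i j : Fin 3)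
    (h : i ≠ j) :
    QuadraticMap.polar M.toQuadraticMap' (Pi.single i 1) (Pi.single j 1) = M i j + M j i := by
  simp only [QuadraticMap.polar, Matrix.toQuadraticMap', Matrix.toQuadraticForm', LinearMap.BilinMap.toQuadraticMap_apply,
    Matrix.toLinearMap₂'_apply, smul_eq_mul]
  fin_cases i <;> fin_cases j <;> simp_all [Fin.sum_univ_three] <;> ring

lemma QK_single (Q : QuadraticForm F (Fin 3 → F)) (i : Fin 3) :
    QK F K Q (Pi.single i 1) = algebraMap F K (Q (Pi.single i 1)) := by
  rw [QK, tqm_single]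
  simp [cmatF]

lemma QK_polar_single (Q : QuadraticForm F (Fin 3 → F)) (i j : Fin 3) (h : i < j) :
    QuadraticMap.polar (QK F K Q) (Pi.single i 1) (Pi.single j 1)
      = algebraMap F K (QuadraticMap.polar Q (Pi.single i 1) (Pi.single j 1)) := by
  rw [QK, tqm_polar _ _ _ h.ne]
  simp [cmatF, h.ne, h.ne', h, not_lt.2 h.le]

lemma sum_cmatF (Q : QuadraticForm F (Fin 3 → F)) (x : Fin 3 → F) :
    ∑ i, ∑ j, x i * x j * cmatF Q i j = Q x := by
  rw [qm_expansion Q x]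
  simp only [Fin.sum_univ_three, cmatF]
  norm_num [Fin.lt_def, Fin.ext_iff]
  ring

lemma eval_rational (Q : QuadraticForm F (Fin 3 → F)) (x : Fin 3 → F) :
    evalBaseChange F K Q (fun i => algebraMap F K (x i)) = algebraMap F K (Q x) := by
  rw [← QK_eq_eval, QK_apply, ← sum_cmatF Q x]
  push_cast [map_sum]
  ring_nf

lemma eval_sub (Q Q' : QuadraticForm F (Fin 3 → F)) (w : Fin 3 → K) :
    evalBaseChange F K (Q - Q') w = evalBaseChange F K Q w - evalBaseChange F K Q' w := by
  have hp : ∀ x y, QuadraticMap.polar (⇑(Q - Q')) x y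
      = QuadraticMap.polar Q x y - QuadraticMap.polar Q' x y := by
    intro x y
    simp only [QuadraticMap.polar, QuadraticMap.sub_apply]
    ring
  simp only [evalBaseChange, QuadraticMap.sub_apply, hp, map_sub]
  simp only [Fin.sum_univ_three, Fin.lt_def]
  norm_num
  ring

lemma eval_smul (c : F) (Q : QuadraticForm F (Fin 3 → F)) (w : Fin 3 → K) :
    evalBaseChange F K (c • Q) w = algebraMap F K c * evalBaseChange F K Q w := by
  have hp : ∀ x y, QuadraticMap.polar (⇑(c • Q)) x y = c * QuadraticMap.polar Q x y := by
    intro x y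
    simp only [QuadraticMap.polar, QuadraticMap.smul_apply, smul_eq_mul]
    ring
  simp only [evalBaseChange, QuadraticMap.smul_apply, hp, map_mul, smul_eq_mul]
  simp only [Fin.sum_univ_three, Fin.lt_def]
  norm_num
  ring

lemma eval_zero (w : Fin 3 → K) : evalBaseChange F K (0 : QuadraticForm F (Fin 3 → F)) w = 0 := by
  simp [evalBaseChange, QuadraticMap.polar]

lemma eval_homog (Q : QuadraticForm F (Fin 3 → F)) (a : K) (w : Fin 3 → K) :
    evalBaseChange F K Q (a • w) = a * a * evalBaseChange F K Q w := by
  rw [← QK_eq_eval, ← QK_eq_eval, QuadraticMap.map_smul, smul_eq_mul]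

lemma mem_zeroLocus_iff (Q : QuadraticForm F (Fin 3 → F)) (w : Fin 3 → K) (hw : w ≠ 0) :
    Projectivization.mk K w hw ∈ zeroLocus F K Q ↔ evalBaseChange F K Q w = 0 := by
  constructor
  · intro h
    exact h w hw rfl
  · intro h u hu huw
    rw [Projectivization.mk_eq_mk_iff] at huw
    obtain ⟨a, ha⟩ := huw
    rw [Units.smul_def] at ha
    have := eval_homog Q (a : K) u
    rw [ha, h] at this
    have ha0 : (a : K) ≠ 0 := a.ne_zero
    field_simp at this
    exact (mul_eq_zero.mp this.symm).resolve_left (pow_ne_zero 2 ha0)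

end B

section C
variable {F K : Type*} [Field F] [Field K] [Algebra F K] [Fintype F] {q : ℕ}

lemma exists_frob [Fintype K] (hF : Fintype.card F = q) :
    ∃ φ : K →+* K, ∀ x, φ x = x ^ q := by
  set p := ringChar F with hp
  haveI : CharP F p := ringChar.charP F
  haveI : Fact p.Prime := ⟨CharP.char_is_prime F p⟩
  haveI : CharP K p := charP_of_injective_algebraMap (algebraMap F K).injective p
  obtain ⟨n, hpp, hcard⟩ := FiniteField.card F p
  exact ⟨iterateFrobenius K p n, fun x => by
    rw [iterateFrobenius_def, ← hcard, hF]⟩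

variable (φ : K →+* K) (hφ : ∀ x, φ x = x ^ q) (hF : Fintype.card F = q)
include hφ hF

lemma alg_fixed (c : F) : φ (algebraMap F K c) = algebraMap F K c := by
  rw [hφ, ← map_pow, ← hF, FiniteField.pow_card]

lemma frob_eval (Q : QuadraticForm F (Fin 3 → F)) (w : Fin 3 → K) :
    evalBaseChange F K Q (fun i => φ (w i)) = φ (evalBaseChange F K Q w) := by
  rw [← QK_eq_eval, ← QK_eq_eval, QK_apply, QK_apply, map_sum]
  refine Finset.sum_congr rfl fun i _ => ?_
  rw [map_sum]
  refine Finset.sum_congr rfl fun j _ => ?_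
  rw [map_mul, map_mul, alg_fixed φ hφ hF]

lemma fixed_mem_range (x : K) (hx : x ^ q = x) : x ∈ Set.range (algebraMap F K) := by
  classical
  have hq2 : 1 < q := hF ▸ Fintype.one_lt_card
  set P : Polynomial K := Polynomial.X ^ q - Polynomial.X with hP
  have hdeg : P.natDegree = q := by
    rw [hP, Polynomial.natDegree_sub_eq_left_of_natDegree_lt (by
      rw [Polynomial.natDegree_X, Polynomial.natDegree_X_pow]; omega),
      Polynomial.natDegree_X_pow]
  have hPne : P ≠ 0 := fun h => by simp [h] at hdeg; omega
  have hroots : ∀ y ∈ Set.range (algebraMap F K) ∪ {x}, y ∈ P.roots.toFinset := by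
    rintro y hy
    rw [Multiset.mem_toFinset, Polynomial.mem_roots hPne]
    rcases hy with ⟨c, rfl⟩ | hy
    · simp [Polynomial.IsRoot, hP, ← map_pow, ← hF, FiniteField.pow_card]
    · simp only [Set.mem_singleton_iff] at hy
      subst hy
      simp [Polynomial.IsRoot, hP, hx]
  by_contra hxr
  have hfin : (Set.range (algebraMap F K) ∪ {x}).Finite := Set.toFinite _
  have hcard1 : (Set.range (algebraMap F K)).ncard = q := by
    rw [← Set.image_univ, Set.ncard_image_of_injective _ (algebraMap F K).injective,
      Set.ncard_univ, Nat.card_eq_fintype_card, hF]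
  have hcard2 : (Set.range (algebraMap F K) ∪ {x}).ncard = q + 1 := by
    rw [Set.union_singleton, Set.ncard_insert_of_notMem hxr (Set.toFinite _), hcard1]
  have hsub : (Set.range (algebraMap F K) ∪ {x}) ⊆ (P.roots.toFinset : Set K) := hroots
  have := Set.ncard_le_ncard hsub (Set.toFinite _)
  rw [hcard2, Set.ncard_coe_finset] at this
  have h2 := Multiset.toFinset_card_le P.roots
  have h3 := P.card_roots' 
  omega

end C

section D
variable {q : ℕ} {K : Type*} [Field K]

lemma li_of_not_collinear (v : Fin 3 → K) (hv : v ≠ 0)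
    (hvq : (fun i => v i ^ q) ≠ 0) (hvq2 : (fun i => v i ^ q ^ 2) ≠ 0)
    (hnc : ¬ Collinear3 K (Projectivization.mk K v hv)
      (Projectivization.mk K (fun i => v i ^ q) hvq)
      (Projectivization.mk K (fun i => v i ^ q ^ 2) hvq2)) :
    LinearIndependent K ![v, (fun i => v i ^ q), (fun i => v i ^ q ^ 2)] := by
  by_contra h
  have hsp : Submodule.span K (Set.range ![v, (fun i => v i ^ q), (fun i => v i ^ q ^ 2)]) ≠ ⊤ := by
    intro htop
    exact h (linearIndependent_of_top_le_span_of_card_eq_finrank (le_of_eq htop.symm)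
      (by simp [Module.finrank_fin_fun]))
  obtain ⟨f, hf0, hfmap⟩ := Submodule.exists_dual_map_eq_bot_of_lt_top
    (lt_top_iff_ne_top.2 hsp) inferInstance
  have hker : ∀ w ∈ Set.range ![v, (fun i => v i ^ q), (fun i => v i ^ q ^ 2)], f w = 0 := by
    intro w hw
    have : f w ∈ Submodule.map f (Submodule.span K
        (Set.range ![v, (fun i => v i ^ q), (fun i => v i ^ q ^ 2)])) :=
      Submodule.mem_map_of_mem (Submodule.subset_span hw)
    rw [hfmap] at this
    simpa using this
  have hrk : Module.finrank K (LinearMap.ker f) = 2 := by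
    have := Module.Dual.finrank_ker_add_one_of_ne_zero hf0
    rw [Module.finrank_fin_fun] at this
    omega
  refine hnc ⟨LinearMap.ker f, hrk, ?_, ?_, ?_⟩ <;>
  · rw [linePoints, Set.mem_setOf_eq, Projectivization.submodule_mk,
      Submodule.span_singleton_le_iff_mem, LinearMap.mem_ker]
    apply hker
    first
      | exact ⟨0, rfl⟩
      | exact ⟨1, rfl⟩
      | exact ⟨2, rfl⟩

end D

section E
variable {K : Type*} [Field K]

noncomputable def basOf {u : Fin 3 → (Fin 3 → K)} (li : LinearIndependent K u) :
    Module.Basis (Fin 3) K (Fin 3 → K) :=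
  basisOfLinearIndependentOfCardEqFinrank li (by simp [Module.finrank_fin_fun])

lemma coe_basOf {u : Fin 3 → (Fin 3 → K)} (li : LinearIndependent K u) :
    ⇑(basOf li) = u :=
  coe_basisOfLinearIndependentOfCardEqFinrank li _

lemma repr_combo {u : Fin 3 → (Fin 3 → K)} (li : LinearIndependent K u) (x y z : K) (k : Fin 3) :
    (basOf li).repr (x • u 0 + y • u 1 + z • u 2) k = ![x, y, z] k := by
  have h0 : u 0 = basOf li 0 := by rw [coe_basOf]
  have h1 : u 1 = basOf li 1 := by rw [coe_basOf]
  have h2 : u 2 = basOf li 2 := by rw [coe_basOf]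
  rw [h0, h1, h2, map_add, map_add, map_smul, map_smul, map_smul, Module.Basis.repr_self,
    Module.Basis.repr_self, Module.Basis.repr_self]
  fin_cases k <;> simp [Finsupp.single_apply]

lemma sum_repr' {u : Fin 3 → (Fin 3 → K)} (li : LinearIndependent K u) (w : Fin 3 → K) :
    w = ((basOf li).repr w 0) • u 0 + ((basOf li).repr w 1) • u 1
      + ((basOf li).repr w 2) • u 2 := by
  have h := Module.Basis.sum_repr (basOf li) w
  rw [Fin.sum_univ_three] at h
  conv_lhs => rw [← h]
  simp [coe_basOf]

end E

section FF
variable {q : ℕ} {F K : Type*} [Field F] [Field K] [Algebra F K] [Fintype F] [Fintype K]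
variable (hF : Fintype.card F = q) (hK : Fintype.card K = q ^ 3)
variable (φ : K →+* K) (hφ : ∀ x, φ x = x ^ q)
variable {v : Fin 3 → K}
variable (li : LinearIndependent K ![v, (fun i => v i ^ q), (fun i => v i ^ q ^ 2)])

include hφ

lemma frob_v0 : (fun i => φ (v i)) = fun i => v i ^ q := by
  funext i; rw [hφ]

lemma frob_v1 : (fun i => φ (v i ^ q)) = fun i => v i ^ q ^ 2 := by
  funext i; rw [hφ, ← pow_mul, sq]

include hK in
lemma frob_v2 : (fun i => φ (v i ^ q ^ 2)) = v := by
  funext i; rw [hφ, ← pow_mul, ← pow_succ, ← hK, FiniteField.pow_card]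

include hK in
lemma frob_frob_frob (x : K) : φ (φ (φ x)) = x := by
  simp only [hφ, ← pow_mul, ← hK]
  rw [show q * q * q = q ^ 3 by ring, ← hK, FiniteField.pow_card]

include hK in
lemma frob_repr (w : Fin 3 → K) (k : Fin 3) :
    (basOf li).repr (fun i => φ (w i)) k
      = ![φ ((basOf li).repr w 2), φ ((basOf li).repr w 0), φ ((basOf li).repr w 1)] k := by
  set r0 := (basOf li).repr w 0
  set r1 := (basOf li).repr w 1
  set r2 := (basOf li).repr w 2
  have hw := sum_repr' li w
  simp only [Matrix.cons_val_zero, Matrix.cons_val_one, Matrix.head_cons,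
    Matrix.cons_val_two, Matrix.tail_cons] at hw
  have key : (fun i => φ (w i))
      = (φ r2) • (![v, (fun i => v i ^ q), (fun i => v i ^ q ^ 2)] 0)
        + (φ r0) • (![v, (fun i => v i ^ q), (fun i => v i ^ q ^ 2)] 1)
        + (φ r1) • (![v, (fun i => v i ^ q), (fun i => v i ^ q ^ 2)] 2) := by
    funext i
    conv_lhs => rw [hw]
    simp only [Pi.add_apply, Pi.smul_apply, smul_eq_mul, map_add, map_mul,
      Matrix.cons_val_zero, Matrix.cons_val_one, Matrix.head_cons,
      Matrix.cons_val_two, Matrix.tail_cons]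
    have e0 := congrFun (frob_v0 (v := v) φ hφ) i
    have e1 := congrFun (frob_v1 (v := v) φ hφ) i
    have e2 := congrFun (frob_v2 hK φ hφ (v := v)) i
    try simp only at e0 e1 e2
    rw [e0, e1, e2]
    try ring
  rw [key, repr_combo]

end FF

noncomputable def polE (F K : Type*) [Field F] [Field K] [Algebra F K]
    (Q : QuadraticForm F (Fin 3 → F)) (a b : Fin 3 → K) : K :=
  evalBaseChange F K Q (a + b) - evalBaseChange F K Q a - evalBaseChange F K Q b

section G
variable {q : ℕ} {F K : Type*} [Field F] [Field K] [Algebra F K] [Fintype F] [Fintype K]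
variable (hF : Fintype.card F = q) (hK : Fintype.card K = q ^ 3)
variable (φ : K →+* K) (hφ : ∀ x, φ x = x ^ q)
variable {v : Fin 3 → K}
variable (li : LinearIndependent K ![v, (fun i => v i ^ q), (fun i => v i ^ q ^ 2)])

lemma polE_eq (Q : QuadraticForm F (Fin 3 → F)) (a b : Fin 3 → K) :
    polE F K Q a b = QuadraticMap.polar (QK F K Q) a b := by
  simp [polE, QuadraticMap.polar, QK_eq_eval]

include hφ hF in
lemma polE_frob (Q : QuadraticForm F (Fin 3 → F)) (a b : Fin 3 → K) :
    polE F K Q (fun i => φ (a i)) (fun i => φ (b i)) = φ (polE F K Q a b) := by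
  have hab : (fun i => φ (a i)) + (fun i => φ (b i)) = fun i => φ ((a + b) i) := by
    funext i; simp
  rw [polE, hab, frob_eval φ hφ hF, frob_eval φ hφ hF, frob_eval φ hφ hF, polE,
    map_sub, map_sub]

lemma polE_sub (Q Q' : QuadraticForm F (Fin 3 → F)) (a b : Fin 3 → K) :
    polE F K (Q - Q') a b = polE F K Q a b - polE F K Q' a b := by
  simp only [polE, eval_sub]; ring

lemma polE_smul (c : F) (Q : QuadraticForm F (Fin 3 → F)) (a b : Fin 3 → K) :
    polE F K (c • Q) a b = algebraMap F K c * polE F K Q a b := by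
  simp only [polE, eval_smul]; ring

include hφ hF hK in
lemma val_formula (Q : QuadraticForm F (Fin 3 → F)) (hQv : evalBaseChange F K Q v = 0)
    (w : Fin 3 → K) :
    evalBaseChange F K Q w
      = φ (polE F K Q v (fun i => v i ^ q ^ 2))
          * ((basOf li).repr w 0 * (basOf li).repr w 1)
        + polE F K Q v (fun i => v i ^ q ^ 2)
          * ((basOf li).repr w 0 * (basOf li).repr w 2)
        + φ (φ (polE F K Q v (fun i => v i ^ q ^ 2)))
          * ((basOf li).repr w 1 * (basOf li).repr w 2) := by
  have h1 : evalBaseChange F K Q (fun i => v i ^ q) = 0 := by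
    rw [← frob_v0 (v := v) φ hφ, frob_eval φ hφ hF, hQv, map_zero]
  have h2 : evalBaseChange F K Q (fun i => v i ^ q ^ 2) = 0 := by
    rw [← frob_v1 (v := v) φ hφ, frob_eval φ hφ hF, h1, map_zero]
  set b := polE F K Q v (fun i => v i ^ q ^ 2) with hbdef
  have hb1 : polE F K Q v (fun i => v i ^ q) = φ b := by
    have := polE_frob hF φ hφ Q v (fun i => v i ^ q ^ 2)
    rw [frob_v0 (v := v) φ hφ, frob_v2 hK φ hφ (v := v)] at this
    rw [← hbdef] at this
    rw [← this, polE, polE]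
    have : (fun i => v i ^ q) + v = v + (fun i => v i ^ q) := add_comm _ _
    rw [this]
    ring
  have hc : polE F K Q (fun i => v i ^ q) (fun i => v i ^ q ^ 2) = φ (φ b) := by
    have := polE_frob hF φ hφ Q v (fun i => v i ^ q)
    rw [frob_v0 (v := v) φ hφ, frob_v1 (v := v) φ hφ, hb1] at this
    exact this
  -- now expand
  have hw := sum_repr' li w
  set r0 := (basOf li).repr w 0
  set r1 := (basOf li).repr w 1
  set r2 := (basOf li).repr w 2
  simp only [Matrix.cons_val_zero, Matrix.cons_val_one, Matrix.head_cons,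
    Matrix.cons_val_two, Matrix.tail_cons] at hw
  conv_lhs => rw [hw, ← QK_eq_eval, expand3]
  rw [QK_eq_eval, QK_eq_eval, QK_eq_eval, ← polE_eq, ← polE_eq, ← polE_eq,
    hQv, h1, h2, hb1, hc, ← hbdef]
  ring

end G

section H
variable {q : ℕ} {F K : Type*} [Field F] [Field K] [Algebra F K] [Fintype F] [Fintype K]
variable (hF : Fintype.card F = q) (hK : Fintype.card K = q ^ 3)
variable (φ : K →+* K) (hφ : ∀ x, φ x = x ^ q)
variable {v : Fin 3 → K}
variable (li : LinearIndependent K ![v, (fun i => v i ^ q), (fun i => v i ^ q ^ 2)])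

include hF hK hφ li in
lemma eq_zero_of_bcoef_eq_zero (Q : QuadraticForm F (Fin 3 → F))
    (hQv : evalBaseChange F K Q v = 0)
    (hb : polE F K Q v (fun i => v i ^ q ^ 2) = 0) : Q = 0 := by
  have hall : ∀ w, evalBaseChange F K Q w = 0 := by
    intro w
    rw [val_formula hF hK φ hφ li Q hQv w, hb]
    simp
  apply DFunLike.ext
  intro x
  have h := eval_rational (K := K) Q x
  rw [hall] at h
  have := (algebraMap F K).injective (by rw [← h, map_zero] : algebraMap F K (Q x) = algebraMap F K 0)
  simpa using this

include hF hK hφ li in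
lemma exists_Q (b : K) : ∃ Q : QuadraticForm F (Fin 3 → F),
    evalBaseChange F K Q v = 0 ∧ polE F K Q v (fun i => v i ^ q ^ 2) = b := by
  classical
  set B := basOf li with hB
  set Mb : Matrix (Fin 3) (Fin 3) K := !![0, φ b, b; 0, 0, φ (φ b); 0, 0, 0] with hMb
  set Gb : QuadraticMap K (Fin 3 → K) K :=
    (Matrix.toQuadraticMap' Mb).comp B.equivFun.toLinearMap with hGb
  have Gb_apply : ∀ w, Gb w = φ b * (B.repr w 0 * B.repr w 1)
      + b * (B.repr w 0 * B.repr w 2) + φ (φ b) * (B.repr w 1 * B.repr w 2) := by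
    intro w
    rw [hGb]
    simp only [QuadraticMap.comp_apply, Matrix.toQuadraticMap', Matrix.toQuadraticForm',
      LinearMap.BilinMap.toQuadraticMap_apply, Matrix.toLinearMap₂'_apply,
      LinearEquiv.coe_coe, Module.Basis.equivFun_apply, smul_eq_mul, Fin.sum_univ_three]
    simp [hMb, Matrix.vecHead, Matrix.vecTail]
    try ring
  have frobGb : ∀ w, Gb (fun i => φ (w i)) = φ (Gb w) := by
    intro w
    rw [Gb_apply, Gb_apply]
    have h0 := frob_repr hK φ hφ li w 0
    have h1 := frob_repr hK φ hφ li w 1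
    have h2 := frob_repr hK φ hφ li w 2
    simp only [Matrix.cons_val_zero, Matrix.cons_val_one, Matrix.head_cons,
      Matrix.cons_val_two, Matrix.tail_cons] at h0 h1 h2
    rw [← hB] at h0 h1 h2
    rw [h0, h1, h2]
    simp only [map_add, map_mul]
    rw [frob_frob_frob hK φ hφ b]
    ring
  have hsing : ∀ i : Fin 3, (fun j => φ ((Pi.single i 1 : Fin 3 → K) j)) = (Pi.single i 1 : Fin 3 → K) := by
    intro i
    funext j
    rcases eq_or_ne j i with h | h
    · subst h; simp
    · simp [Pi.single_apply, h]
  have hadd : ∀ x y : Fin 3 → K,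
      (fun k => φ ((x + y) k)) = (fun k => φ (x k)) + (fun k => φ (y k)) := by
    intro x y; funext k; simp
  have fixed_d : ∀ i : Fin 3, ∃ c : F, algebraMap F K c = Gb (Pi.single i 1) := by
    intro i
    have h := frobGb (Pi.single i 1)
    rw [hsing i] at h
    exact fixed_mem_range φ hφ hF _ (by rw [← hφ]; exact h.symm)
  have fixed_p : ∀ i j : Fin 3, ∃ c : F,
      algebraMap F K c = QuadraticMap.polar (⇑Gb) (Pi.single i 1) (Pi.single j 1) := by
    intro i j
    have h : φ (QuadraticMap.polar (⇑Gb) (Pi.single i 1) (Pi.single j 1))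
        = QuadraticMap.polar (⇑Gb) (Pi.single i 1) (Pi.single j 1) := by
      rw [QuadraticMap.polar, map_sub, map_sub, ← frobGb, ← frobGb, ← frobGb,
        hadd, hsing i, hsing j]
    exact fixed_mem_range φ hφ hF _ (by rw [← hφ]; exact h)
  choose d hd using fixed_d
  choose pp hpp using fixed_p
  set A : Matrix (Fin 3) (Fin 3) F :=
    (fun i j => if i = j then d i else if i < j then pp i j else 0) with hA
  have hQG : QK F K A.toQuadraticMap' = Gb := by
    apply qm_ext3
    · intro i
      rw [QK_single, tqm_single, hA]
      simpa using hd i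
    · intro i j hij
      rw [QK_polar_single _ _ _ hij, tqm_polar _ _ _ hij.ne, hA]
      simp only [hij.ne, if_false, hij, if_true, hij.ne', not_lt.2 hij.le, add_zero]
      exact hpp i j
  have hrv : ∀ k, B.repr v k = ![1, 0, 0] k := by
    intro k
    have hv' : v = (1:K) • (![v, (fun i => v i ^ q), (fun i => v i ^ q ^ 2)] 0)
        + (0:K) • (![v, (fun i => v i ^ q), (fun i => v i ^ q ^ 2)] 1)
        + (0:K) • (![v, (fun i => v i ^ q), (fun i => v i ^ q ^ 2)] 2) := by
      simp
    conv_lhs => rw [hv']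
    exact repr_combo li 1 0 0 k
  have hrv2 : ∀ k, B.repr (fun i => v i ^ q ^ 2) k = ![0, 0, 1] k := by
    intro k
    have hv' : (fun i => v i ^ q ^ 2) = (0:K) • (![v, (fun i => v i ^ q), (fun i => v i ^ q ^ 2)] 0)
        + (0:K) • (![v, (fun i => v i ^ q), (fun i => v i ^ q ^ 2)] 1)
        + (1:K) • (![v, (fun i => v i ^ q), (fun i => v i ^ q ^ 2)] 2) := by
      simp
    conv_lhs => rw [hv']
    exact repr_combo li 0 0 1 k
  have hrv3 : ∀ k, B.repr (v + fun i => v i ^ q ^ 2) k = ![1, 0, 1] k := by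
    intro k
    have hv' : (v + fun i => v i ^ q ^ 2)
        = (1:K) • (![v, (fun i => v i ^ q), (fun i => v i ^ q ^ 2)] 0)
        + (0:K) • (![v, (fun i => v i ^ q), (fun i => v i ^ q ^ 2)] 1)
        + (1:K) • (![v, (fun i => v i ^ q), (fun i => v i ^ q ^ 2)] 2) := by
      simp
    conv_lhs => rw [hv']
    exact repr_combo li 1 0 1 k
  have hGv : Gb v = 0 := by
    rw [Gb_apply, hrv 0, hrv 1, hrv 2]
    simp
  have hGv2 : Gb (fun i => v i ^ q ^ 2) = 0 := by
    rw [Gb_apply, hrv2 0, hrv2 1, hrv2 2]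
    simp
  have hGv3 : Gb (v + fun i => v i ^ q ^ 2) = b := by
    rw [Gb_apply, hrv3 0, hrv3 1, hrv3 2]
    simp
  refine ⟨A.toQuadraticMap', ?_, ?_⟩
  · rw [← QK_eq_eval, hQG, hGv]
  · rw [polE_eq, hQG, QuadraticMap.polar, hGv3, hGv, hGv2]
    ring

end H

section I
variable {q : ℕ} {F K : Type*} [Field F] [Field K] [Algebra F K] [Fintype F] [Fintype K]
variable (hF : Fintype.card F = q) (hK : Fintype.card K = q ^ 3)
variable (φ : K →+* K) (hφ : ∀ x, φ x = x ^ q)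
variable {v : Fin 3 → K}
variable (li : LinearIndependent K ![v, (fun i => v i ^ q), (fun i => v i ^ q ^ 2)])

include hF hK hφ li in
lemma scalar_of_locus_eq (Q Q' : QuadraticForm F (Fin 3 → F)) (hQ : Q ≠ 0) (hQ' : Q' ≠ 0)
    (hQv : evalBaseChange F K Q v = 0) (hQ'v : evalBaseChange F K Q' v = 0)
    (hloc : zeroLocus F K Q = zeroLocus F K Q') :
    ∃ c : F, c ≠ 0 ∧ Q' = c • Q := by
  classical
  set b := polE F K Q v (fun i => v i ^ q ^ 2) with hbd
  set b' := polE F K Q' v (fun i => v i ^ q ^ 2) with hb'd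
  have hb : b ≠ 0 := fun h => hQ (eq_zero_of_bcoef_eq_zero hF hK φ hφ li Q hQv h)
  have hb' : b' ≠ 0 := fun h => hQ' (eq_zero_of_bcoef_eq_zero hF hK φ hφ li Q' hQ'v h)
  have hφb : φ b ≠ 0 := by rw [hφ]; exact pow_ne_zero _ hb
  have claim : ∀ x₀ : K, x₀ ≠ 0 → φ b * x₀ + φ (φ b) ≠ 0 →
      (b' * φ b - φ b' * b) * x₀ + (b' * φ (φ b) - φ (φ b') * b) = 0 := by
    intro x₀ hx0 hden
    set x₁ := -(b * x₀) / (φ b * x₀ + φ (φ b)) with hx1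
    set w := x₀ • v + x₁ • (fun i => v i ^ q) + (fun i => v i ^ q ^ 2) with hw
    have hrw : ∀ k, (basOf li).repr w k = ![x₀, x₁, 1] k := by
      intro k
      have hw' : w = x₀ • (![v, (fun i => v i ^ q), (fun i => v i ^ q ^ 2)] 0)
          + x₁ • (![v, (fun i => v i ^ q), (fun i => v i ^ q ^ 2)] 1)
          + (1:K) • (![v, (fun i => v i ^ q), (fun i => v i ^ q ^ 2)] 2) := by
        rw [hw]; simp
      conv_lhs => rw [hw']
      exact repr_combo li x₀ x₁ 1 k
    have hwne : w ≠ 0 := by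
      intro h0
      have h2 := hrw 2
      rw [h0, map_zero] at h2
      simp at h2
    have hx1D : x₁ * (φ b * x₀ + φ (φ b)) = -(b * x₀) := by
      rw [hx1, div_mul_cancel₀ _ hden]
    have hevQ : evalBaseChange F K Q w = 0 := by
      rw [val_formula hF hK φ hφ li Q hQv w, hrw 0, hrw 1, hrw 2, ← hbd]
      simp only [Matrix.cons_val_zero, Matrix.cons_val_one, Matrix.head_cons,
        Matrix.cons_val_two, Matrix.tail_cons]
      have : φ b * (x₀ * x₁) + b * (x₀ * 1) + φ (φ b) * (x₁ * 1)
          = x₁ * (φ b * x₀ + φ (φ b)) + b * x₀ := by ring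
      rw [this, hx1D]
      ring
    have hmem : Projectivization.mk K w hwne ∈ zeroLocus F K Q :=
      (mem_zeroLocus_iff Q w hwne).2 hevQ
    rw [hloc] at hmem
    have hevQ' : evalBaseChange F K Q' w = 0 := (mem_zeroLocus_iff Q' w hwne).1 hmem
    rw [val_formula hF hK φ hφ li Q' hQ'v w, hrw 0, hrw 1, hrw 2, ← hb'd] at hevQ'
    simp only [Matrix.cons_val_zero, Matrix.cons_val_one, Matrix.head_cons,
      Matrix.cons_val_two, Matrix.tail_cons] at hevQ'
    have hmul := congrArg (fun t => t * (φ b * x₀ + φ (φ b))) hevQ'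
    simp only [zero_mul] at hmul
    have hexp : (φ b' * (x₀ * x₁) + b' * (x₀ * 1) + φ (φ b') * (x₁ * 1))
        * (φ b * x₀ + φ (φ b))
        = φ b' * x₀ * (x₁ * (φ b * x₀ + φ (φ b))) + b' * x₀ * (φ b * x₀ + φ (φ b))
          + φ (φ b') * (x₁ * (φ b * x₀ + φ (φ b))) := by ring
    rw [hexp, hx1D] at hmul
    have hfin : x₀ * ((b' * φ b - φ b' * b) * x₀ + (b' * φ (φ b) - φ (φ b') * b)) = 0 := by
      rw [← hmul]; ring
    rcases mul_eq_zero.1 hfin with h | h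
    · exact absurd h hx0
    · exact h
  -- find two distinct valid points
  have hq2 : 1 < q := hF ▸ Fintype.one_lt_card
  have hcardK : 3 < Fintype.card K := by
    rw [hK]
    calc 3 < 2 ^ 3 := by norm_num
    _ ≤ q ^ 3 := Nat.pow_le_pow_left hq2 3
  set bad : Finset K := {0, -φ (φ b) / φ b} with hbad
  have hbadcard : bad.card ≤ 2 := Finset.card_insert_le _ _ |>.trans (by simp)
  have hgood : 1 < (Finset.univ \ bad).card := by
    have h1 := Finset.le_card_sdiff bad (Finset.univ : Finset K)
    have hu : (Finset.univ : Finset K).card = Fintype.card K := Finset.card_univ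
    omega
  obtain ⟨x₀, hx₀m, y₀, hy₀m, hxy⟩ := Finset.one_lt_card.1 hgood
  have hval : ∀ z ∈ Finset.univ \ bad, z ≠ 0 ∧ φ b * z + φ (φ b) ≠ 0 := by
    intro z hz
    rw [Finset.mem_sdiff, hbad] at hz
    obtain ⟨-, hz2⟩ := hz
    simp only [Finset.mem_insert, Finset.mem_singleton] at hz2
    push_neg at hz2
    refine ⟨hz2.1, fun h => hz2.2 ?_⟩
    rw [eq_div_iff hφb]
    linear_combination h
  obtain ⟨hx1, hx2⟩ := hval x₀ hx₀m
  obtain ⟨hy1, hy2⟩ := hval y₀ hy₀m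
  have hA : b' * φ b - φ b' * b = 0 := by
    have c1 := claim x₀ hx1 hx2
    have c2 := claim y₀ hy1 hy2
    have : (b' * φ b - φ b' * b) * (x₀ - y₀) = 0 := by linear_combination c1 - c2
    rcases mul_eq_zero.1 this with h | h
    · exact h
    · exact absurd (sub_eq_zero.1 h) hxy
  set lam := b' / b with hlam
  have hlamfix : lam ^ q = lam := by
    rw [← hφ, hlam, map_div₀]
    rw [div_eq_div_iff hφb hb]
    linear_combination -hA
  obtain ⟨c, hc⟩ := fixed_mem_range φ hφ hF lam hlamfix
  have hlamne : lam ≠ 0 := div_ne_zero hb' hb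
  have hcne : c ≠ 0 := by
    intro h
    rw [h, map_zero] at hc
    exact hlamne hc.symm
  refine ⟨c, hcne, ?_⟩
  have hsub : Q' - c • Q = 0 := by
    apply eq_zero_of_bcoef_eq_zero hF hK φ hφ li
    · rw [eval_sub, eval_smul, hQv, hQ'v]
      ring
    · rw [polE_sub, polE_smul, ← hbd, ← hb'd, hc, hlam, div_mul_cancel₀ _ hb]
      ring
  exact sub_eq_zero.1 hsub
end I

section J
variable {F K : Type*} [Field F] [Field K] [Algebra F K]

lemma zeroLocus_smul (c : F) (hc : c ≠ 0) (Q : QuadraticForm F (Fin 3 → F)) :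
    zeroLocus F K (c • Q) = zeroLocus F K Q := by
  have halg : algebraMap F K c ≠ 0 := fun h =>
    hc ((algebraMap F K).injective (by rw [h, map_zero]))
  ext x
  induction x using Projectivization.ind with
  | h w hw =>
    rw [mem_zeroLocus_iff, mem_zeroLocus_iff, eval_smul]
    constructor
    · intro h
      rcases mul_eq_zero.1 h with h' | h'
      · exact absurd h' halg
      · exact h'
    · intro h
      rw [h, mul_zero]

end J

/-- Let `P` be a point of `PG(2,q^3)` (with representative vector `v`) such that `P`, `P^q`
and `P^{q^2}` are not collinear. Then the number of distinct subsets `C` of `PG(2,q^3)`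
that are the zero locus of the base change to `K` of some nonzero quadratic form on `F^3`
and contain `P` is exactly `q^2+q+1`. -/
theorem card_special_conics (q : ℕ) (F K : Type*) [Field F] [Field K]
    [Algebra F K] [Fintype F] [Fintype K]
    (hF : Fintype.card F = q) (hK : Fintype.card K = q ^ 3)
    (v : Fin 3 → K) (hv : v ≠ 0)
    (hvq : (fun i => v i ^ q) ≠ 0) (hvq2 : (fun i => v i ^ q ^ 2) ≠ 0)
    (hnc : ¬ Collinear3 K (Projectivization.mk K v hv)
      (Projectivization.mk K (fun i => v i ^ q) hvq)
      (Projectivization.mk K (fun i => v i ^ q ^ 2) hvq2)) :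
    {C : Set (ℙ K (Fin 3 → K)) |
        (∃ Q : QuadraticForm F (Fin 3 → F), Q ≠ 0 ∧ C = zeroLocus F K Q) ∧
        Projectivization.mk K v hv ∈ C}.ncard = q ^ 2 + q + 1 := by
  classical
  obtain ⟨φ, hφ⟩ := exists_frob (K := K) hF
  have li := li_of_not_collinear v hv hvq hvq2 hnc
  haveI : Finite (QuadraticForm F (Fin 3 → F)) :=
    Finite.of_injective (fun Q => (Q : (Fin 3 → F) → F)) DFunLike.coe_injective
  set N : Set (QuadraticForm F (Fin 3 → F)) := {Q | evalBaseChange F K Q v = 0} with hN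
  set S : Set (QuadraticForm F (Fin 3 → F)) := {Q | Q ≠ 0 ∧ evalBaseChange F K Q v = 0} with hS
  have hNcard : N.ncard = q ^ 3 := by
    have hinj : Set.InjOn (fun Q => polE F K Q v (fun i => v i ^ q ^ 2)) N := by
      intro Q hQ Q' hQ' h
      simp only at h
      have hQm : evalBaseChange F K Q v = 0 := hQ
      have hQ'm : evalBaseChange F K Q' v = 0 := hQ'
      have hsub : Q - Q' = 0 := by
        apply eq_zero_of_bcoef_eq_zero hF hK φ hφ li
        · rw [eval_sub, hQm, hQ'm, sub_zero]
        · rw [polE_sub, h, sub_self]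
      exact sub_eq_zero.1 hsub
    have himg : (fun Q => polE F K Q v (fun i => v i ^ q ^ 2)) '' N = Set.univ := by
      ext b
      simp only [Set.mem_image, Set.mem_univ, iff_true]
      obtain ⟨Q, h1, h2⟩ := exists_Q hF hK φ hφ li b
      exact ⟨Q, h1, h2⟩
    rw [← Set.ncard_image_of_injOn hinj, himg, Set.ncard_univ, Nat.card_eq_fintype_card, hK]
  have h0N : (0 : QuadraticForm F (Fin 3 → F)) ∈ N := eval_zero v
  have hSN : S = N \ {0} := by
    ext Q
    simp only [hS, hN, Set.mem_setOf_eq, Set.mem_diff, Set.mem_singleton_iff]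
    tauto
  have hScard : S.ncard = q ^ 3 - 1 := by
    rw [hSN, Set.ncard_diff_singleton_of_mem h0N, hNcard]
  set Z : QuadraticForm F (Fin 3 → F) → Set (ℙ K (Fin 3 → K)) := fun Q => zeroLocus F K Q with hZ
  have hCim : {C : Set (ℙ K (Fin 3 → K)) |
        (∃ Q : QuadraticForm F (Fin 3 → F), Q ≠ 0 ∧ C = zeroLocus F K Q) ∧
        Projectivization.mk K v hv ∈ C} = Z '' S := by
    ext Cs
    simp only [Set.mem_setOf_eq, Set.mem_image, hS, hZ]
    constructor
    · rintro ⟨⟨Q, hQne, rfl⟩, hmem⟩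
      exact ⟨Q, ⟨hQne, (mem_zeroLocus_iff Q v hv).1 hmem⟩, rfl⟩
    · rintro ⟨Q, ⟨hQne, hQv⟩, rfl⟩
      exact ⟨⟨Q, hQne, rfl⟩, (mem_zeroLocus_iff Q v hv).2 hQv⟩
  have hSfin : S.Finite := Set.toFinite S
  set s : Finset (QuadraticForm F (Fin 3 → F)) := hSfin.toFinset with hs
  set t : Finset (Set (ℙ K (Fin 3 → K))) := s.image Z with ht
  have hst : s.card = ∑ Cs ∈ t, (s.filter (fun Q => Z Q = Cs)).card :=
    Finset.card_eq_sum_card_fiberwise (fun x hx => Finset.mem_image_of_mem _ hx)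
  have hfib : ∀ Cs ∈ t, (s.filter fun Q => Z Q = Cs).card = q - 1 := by
    intro Cs hCs
    obtain ⟨Q₀, hQ₀s, hQ₀⟩ := Finset.mem_image.1 hCs
    have hQ₀S : Q₀ ∈ S := hSfin.mem_toFinset.1 hQ₀s
    have hkey : s.filter (fun Q => Z Q = Cs)
        = (Finset.univ \ {0} : Finset F).image (fun c => c • Q₀) := by
      ext Q
      simp only [Finset.mem_filter, Finset.mem_image, Finset.mem_sdiff, Finset.mem_univ,
        Finset.mem_singleton, true_and]
      constructor
      · rintro ⟨hQs, hQC⟩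
        have hQS := hSfin.mem_toFinset.1 hQs
        obtain ⟨c, hc0, hceq⟩ := scalar_of_locus_eq hF hK φ hφ li Q₀ Q hQ₀S.1 hQS.1
          hQ₀S.2 hQS.2 (by rw [← hQ₀] at hQC; exact hQC.symm)
        exact ⟨c, hc0, hceq.symm⟩
      · rintro ⟨c, hc0, rfl⟩
        have hne : c • Q₀ ≠ 0 := fun h => hQ₀S.1 (by
          have := congrArg (fun X => c⁻¹ • X) h
          simpa [smul_smul, inv_mul_cancel₀ hc0] using this)
        have hev : evalBaseChange F K (c • Q₀) v = 0 := by
          rw [eval_smul, hQ₀S.2, mul_zero]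
        refine ⟨hSfin.mem_toFinset.2 ⟨hne, hev⟩, ?_⟩
        rw [← hQ₀, hZ]
        exact zeroLocus_smul c hc0 Q₀
    rw [hkey, Finset.card_image_of_injOn, Finset.card_sdiff_of_subset (by simp), Finset.card_univ,
      Finset.card_singleton, hF]
    intro c hc c' hc' hcc
    simp only at hcc
    by_contra hne
    have hz : (c - c') • Q₀ = 0 := by
      calc (c - c') • Q₀ = c • Q₀ - c' • Q₀ := sub_smul c c' Q₀
      _ = 0 := by rw [hcc, sub_self]
    refine hQ₀S.1 ?_
    have hQ0 : Q₀ = ((c - c')⁻¹ * (c - c')) • Q₀ := by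
      rw [inv_mul_cancel₀ (sub_ne_zero.2 hne), one_smul]
    rw [hQ0, mul_smul, hz, smul_zero]
  have hcount : s.card = t.card * (q - 1) := by
    rw [hst, Finset.sum_congr rfl hfib, Finset.sum_const, smul_eq_mul]
  have hsc : s.card = q ^ 3 - 1 := by
    rw [hs, ← Set.ncard_eq_toFinset_card S hSfin, hScard]
  have htc : {C : Set (ℙ K (Fin 3 → K)) |
        (∃ Q : QuadraticForm F (Fin 3 → F), Q ≠ 0 ∧ C = zeroLocus F K Q) ∧
        Projectivization.mk K v hv ∈ C}.ncard = t.card := by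
    rw [hCim, ht, ← Set.ncard_coe_finset (s.image Z), Finset.coe_image, hSfin.coe_toFinset]
  rw [htc]
  -- arithmetic
  have hq2 : 1 < q := hF ▸ Fintype.one_lt_card
  obtain ⟨k, rfl⟩ : ∃ k, q = k + 2 := ⟨q - 2, by omega⟩
  have e : (k + 2) ^ 3 = ((k + 2) ^ 2 + (k + 2) + 1) * (k + 1) + 1 := by ring
  have e2 : (k + 2) ^ 3 - 1 = ((k + 2) ^ 2 + (k + 2) + 1) * (k + 1) := Nat.sub_eq_of_eq_add e
  have hsub1 : (k + 2) - 1 = k + 1 := by omega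
  rw [hsub1] at hcount
  have hfinal : t.card * (k + 1) = ((k + 2) ^ 2 + (k + 2) + 1) * (k + 1) := by
    rw [← e2, ← hcount, hsc]
  exact Nat.eq_of_mul_eq_mul_right (by omega) hfinal
end
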